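/- For any simple elementary language p ∈ 𝒮ℰ(Σ) and any letter a ∈ Σ, both the discrete successor Suc_a(p) and the continuous successor Suc_t(p) are simple elementary languages. -/

import Mathlib

open scoped NNReal

namespace TimedLang

/-- Comparison relations appearing in timed conditions. -/
inductive Rel where
  | lt
  | le
  | ge
  | gt
deriving DecidableEq

/-- Semantics of a comparison `x ⋈ d` (with `d ∈ ℕ`). -/
def Rel.holds : Rel → ℝ≥0 → ℕ → Prop
  | .lt, x, d => x < (d : ℝ≥0)
  | .le, x, d => x ≤ (d : ℝ≥0)
  | .ge, x, d => (d : ℝ≥0) ≤ x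
  | .gt, x, d => (d : ℝ≥0) < x

/-- `sumT v i j` is the sum `T_{i,j} = τ_i + τ_{i+1} + ⋯ + τ_j` of the entries of `v`. -/
def sumT (v : List ℝ≥0) (i j : ℕ) : ℝ≥0 :=
  ((v.drop i).take (j + 1 - i)).sum

/-- An atomic constraint `T_{i,j} ⋈ d`. -/
structure TCAtom where
  i : ℕ
  j : ℕ
  rel : Rel
  d : ℕ
deriving DecidableEq

/-- A timed condition: a finite conjunction of atomic constraints over variables τ₀, …, τₙ. -/
structure TCond where
  n : ℕ
  atoms : Finset TCAtom

/-- Well-formedness: every atom constrains a sum `T_{i,j}` with `i ≤ j ≤ n`. -/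
def TCond.WF (c : TCond) : Prop := ∀ a ∈ c.atoms, a.i ≤ a.j ∧ a.j ≤ c.n

/-- A valuation (a list of n+1 nonnegative reals) satisfies a timed condition. -/
def TCond.Sat (c : TCond) (v : List ℝ≥0) : Prop :=
  v.length = c.n + 1 ∧ ∀ a ∈ c.atoms, a.rel.holds (sumT v a.i a.j) a.d

/-- The set of satisfying valuations is bounded. -/
def TCond.Bounded (c : TCond) : Prop := ∃ M : ℝ≥0, ∀ v, c.Sat v → v.sum ≤ M

/-- A timed condition is simple if for each `T_{i,j}` it contains
`d < T_{i,j} < d+1` or `T_{i,j} = d` for some natural number `d`. -/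
def TCond.Simple (c : TCond) : Prop :=
  ∀ i j : ℕ, i ≤ j → j ≤ c.n → ∃ d : ℕ,
    ((⟨i, j, Rel.gt, d⟩ : TCAtom) ∈ c.atoms ∧ (⟨i, j, Rel.lt, d + 1⟩ : TCAtom) ∈ c.atoms) ∨
    ((⟨i, j, Rel.ge, d⟩ : TCAtom) ∈ c.atoms ∧ (⟨i, j, Rel.le, d⟩ : TCAtom) ∈ c.atoms)

/-- A timed condition is canonical if no inequality `T_{i,j} ⋈ d` can be strengthened or
added without changing its semantics: every semantically implied atomic constraint is
subsumed by an explicit atom on the same pair of indices. -/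
def TCond.Canonical (c : TCond) : Prop :=
  ∀ a : TCAtom, a.i ≤ a.j → a.j ≤ c.n →
    (∀ v, c.Sat v → a.rel.holds (sumT v a.i a.j) a.d) →
    ∃ b ∈ c.atoms, b.i = a.i ∧ b.j = a.j ∧ ∀ x : ℝ≥0, b.rel.holds x b.d → a.rel.holds x a.d

/-- A timed word: an alternating sequence `τ₀ a₁ τ₁ a₂ … aₙ τₙ`,
encoded as the word `a₁ … aₙ` together with the list of delays `τ₀, …, τₙ`. -/
structure TimedWord (A : Type) where
  word : List A
  delays : List ℝ≥0

/-- Well-formedness of a timed word: there are `n+1` delays for `n` letters.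
`𝒯(Σ)` is the set of well-formed timed words. -/
def TimedWord.WF {A : Type} (w : TimedWord A) : Prop :=
  w.delays.length = w.word.length + 1

/-- Concatenation of timed words: the last delay of `w` is merged with the first
delay of `w'`. -/
def TimedWord.concat {A : Type} (w w' : TimedWord A) : TimedWord A :=
  ⟨w.word ++ w'.word,
    w.delays.dropLast ++ (w.delays.getLastD 0 + w'.delays.headD 0) :: w'.delays.tail⟩

/-- `w` is a prefix of `w'` (with respect to concatenation of timed words). -/
def TimedWord.IsPrefix {A : Type} (w w' : TimedWord A) : Prop :=
  ∃ w'' : TimedWord A, w''.WF ∧ w.concat w'' = w'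

/-- An elementary language `(u, Λ)`. -/
structure ElemLang (A : Type) where
  word : List A
  cond : TCond

/-- The set of timed words belonging to the elementary language. -/
def ElemLang.toSet {A : Type} (p : ElemLang A) : Set (TimedWord A) :=
  {w | w.word = p.word ∧ p.cond.Sat w.delays}

/-- Well-formedness of an elementary language: the timed condition is over
`τ₀, …, τ_{|u|}` and its set of satisfying valuations is bounded. -/
def ElemLang.WF {A : Type} (p : ElemLang A) : Prop :=
  p.cond.n = p.word.length ∧ p.cond.WF ∧ p.cond.Bounded

/-- An elementary language is simple if it equals `(u, Λ')` for some simple and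
canonical timed condition `Λ'`. -/
def ElemLang.IsSimple {A : Type} (p : ElemLang A) : Prop :=
  ∃ c' : TCond, c'.n = p.cond.n ∧ c'.WF ∧ c'.Simple ∧ c'.Canonical ∧
    ∀ v, p.cond.Sat v ↔ c'.Sat v

/-- `ℰ(Σ)`: the set of (well-formed) elementary languages over the alphabet `A`. -/
def allElem (A : Type) : Set (ElemLang A) := {p | p.WF}

/-- `𝒮ℰ(Σ)`: the set of simple elementary languages over the alphabet `A`. -/
def simpleElem (A : Type) : Set (ElemLang A) := {p | p.WF ∧ p.IsSimple}

/-- `p` is a prefix of `p'` (as elementary languages). -/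
def ElemLang.IsPrefixOf {A : Type} (p p' : ElemLang A) : Prop :=
  (∀ w' ∈ p'.toSet, ∃ w ∈ p.toSet, w.IsPrefix w') ∧
  (∀ w ∈ p.toSet, ∃ w' ∈ p'.toSet, w.IsPrefix w')

/-- Symbolic membership `Sym_L(p⋅s)` of the concatenation `p⋅s` in `L`, as the strongest
constraint over the two blocks of variables (those of `p` and those of `s`): the set of
pairs of valuations of timed words `w ∈ p`, `w'' ∈ s` with `w⋅w'' ∈ L`. -/
def SymPair {A : Type} (L : Set (TimedWord A)) (p s : ElemLang A) :
    Set (List ℝ≥0 × List ℝ≥0) :=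
  {vv | ∃ w w'' : TimedWord A, w ∈ p.toSet ∧ w'' ∈ s.toSet ∧
    w.delays = vv.1 ∧ w''.delays = vv.2 ∧ w.concat w'' ∈ L}

/-- A renaming equation over variable blocks `𝕋 = {τ₀,…,τₙ}` and `𝕋' = {τ'₀,…,τ'ₙ'}`:
a finite conjunction of equations `T_{i,n} = T'_{i',n'}`, given by the set of pairs
`(i, i')`. -/
structure RenamingEq where
  n : ℕ
  n' : ℕ
  pairs : Finset (ℕ × ℕ)

def RenamingEq.WF (R : RenamingEq) : Prop := ∀ q ∈ R.pairs, q.1 ≤ R.n ∧ q.2 ≤ R.n'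

/-- A pair of valuations satisfies a renaming equation. -/
def RenamingEq.Sat (R : RenamingEq) (v v' : List ℝ≥0) : Prop :=
  ∀ q ∈ R.pairs, sumT v q.1 R.n = sumT v' q.2 R.n'

/-- The same renaming equation, read in the other direction. -/
def RenamingEq.symm (R : RenamingEq) : RenamingEq :=
  ⟨R.n', R.n, R.pairs.image Prod.swap⟩

/-- `Rename(φ, R)`: the constraint obtained from `φ` by replacing each sum `T_{i,n}`
by `T'_{i',n'}` according to the equations of `R` (semantic counterpart:
image of `φ` under the renaming relation). -/
def RenameC (R : RenamingEq) (φ : Set (List ℝ≥0 × List ℝ≥0)) :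
    Set (List ℝ≥0 × List ℝ≥0) :=
  {vv | ∃ v : List ℝ≥0, R.Sat v vv.1 ∧ (v, vv.2) ∈ φ}

/-- `p ⊑^{s,R}_L p'`. -/
def Sqsub {A : Type} (L : Set (TimedWord A)) (s : ElemLang A) (R : RenamingEq)
    (p p' : ElemLang A) : Prop :=
  (∀ w ∈ p.toSet, ∃ w' ∈ p'.toSet, R.Sat w.delays w'.delays) ∧
  (∀ vv : List ℝ≥0 × List ℝ≥0,
    (vv ∈ RenameC R (SymPair L p s) ∧ p'.cond.Sat vv.1) ↔
    (vv ∈ SymPair L p' s ∧ ∃ v : List ℝ≥0, R.Sat v vv.1 ∧ p.cond.Sat v))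

/-- `p ~^{s,R}_L p'`. -/
def EquivOne {A : Type} (L : Set (TimedWord A)) (s : ElemLang A) (R : RenamingEq)
    (p p' : ElemLang A) : Prop :=
  Sqsub L s R p p' ∧ Sqsub L s R.symm p' p

/-- `p ~^{S,R}_L p'`. -/
def EquivSR {A : Type} (L : Set (TimedWord A)) (S : Set (ElemLang A)) (R : RenamingEq)
    (p p' : ElemLang A) : Prop :=
  ∀ s ∈ S, EquivOne L s R p p'

/-- `p ~^S_L p'`. -/
def EquivS {A : Type} (L : Set (TimedWord A)) (S : Set (ElemLang A))
    (p p' : ElemLang A) : Prop :=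
  ∃ R : RenamingEq, R.WF ∧ R.n = p.word.length ∧ R.n' = p'.word.length ∧
    EquivSR L S R p p'

/-- `Λ ∧ τ_{n+1} = 0`: the timed condition of a discrete immediate exterior/successor. -/
def TCond.extendZero (c : TCond) : TCond :=
  ⟨c.n + 1, c.atoms ∪
    ({⟨c.n + 1, c.n + 1, Rel.le, 0⟩, ⟨c.n + 1, c.n + 1, Rel.ge, 0⟩} : Finset TCAtom)⟩

/-- The atoms of `c` that are part of an equation `T_{i,n} = d` on a suffix sum. -/
def TCond.suffixEqAtoms (c : TCond) : Finset TCAtom :=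
  c.atoms.filter (fun a => a.j = c.n ∧
    ((a.rel = Rel.ge ∧ (⟨a.i, a.j, Rel.le, a.d⟩ : TCAtom) ∈ c.atoms) ∨
     (a.rel = Rel.le ∧ (⟨a.i, a.j, Rel.ge, a.d⟩ : TCAtom) ∈ c.atoms)))

/-- The atoms of `c` of the form `T_{i,n} < d`. -/
def TCond.suffixLtAtoms (c : TCond) : Finset TCAtom :=
  c.atoms.filter (fun a => a.j = c.n ∧ a.rel = Rel.lt)

/-- `Λᵗ` for the continuous immediate exterior: every equation `T_{i,n} = d` is replaced
by `T_{i,n} > d` if such an equation exists; otherwise the inequality `T_{i,n} < d` with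
the smallest index `i` is replaced by `T_{i,n} = d`. -/
def TCond.extTCond (c : TCond) : TCond :=
  if c.suffixEqAtoms.Nonempty then
    ⟨c.n, (c.atoms \ c.suffixEqAtoms) ∪
      c.suffixEqAtoms.image (fun a => (⟨a.i, a.j, Rel.gt, a.d⟩ : TCAtom))⟩
  else if h : c.suffixLtAtoms.Nonempty then
    let i0 := (c.suffixLtAtoms.image TCAtom.i).min' (h.image TCAtom.i)
    let repl := c.suffixLtAtoms.filter (fun a => a.i = i0)
    ⟨c.n, ((c.atoms \ repl) ∪
      repl.image (fun a => (⟨a.i, a.j, Rel.ge, a.d⟩ : TCAtom))) ∪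
      repl.image (fun a => (⟨a.i, a.j, Rel.le, a.d⟩ : TCAtom))⟩
  else c

/-- `i` indexes a suffix sum `T_{i,n}` whose fractional part is greatest
(w.r.t. the order `≺` determined by the condition). -/
def TCond.MaxFracIdx (c : TCond) (i : ℕ) : Prop :=
  i ≤ c.n ∧ ∀ v, c.Sat v → ∀ k, k ≤ c.n →
    Int.fract ((sumT v k c.n : ℝ≥0) : ℝ) ≤ Int.fract ((sumT v i c.n : ℝ≥0) : ℝ)

open Classical in
/-- The strict atoms `d < T_{i,n} < d+1` on suffix sums with `≺`-greatest fractional part. -/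
noncomputable def TCond.maxFracAtoms (c : TCond) : Finset TCAtom :=
  c.atoms.filter (fun a => a.j = c.n ∧ (a.rel = Rel.gt ∨ a.rel = Rel.lt) ∧ c.MaxFracIdx a.i)

/-- `Λᵗ` for the continuous successor: if `Λ` contains an equation `T_{i,n} = d`, all such
equations are replaced by `d < T_{i,n} < d+1`; otherwise, for each `T_{i,n}` greatest in
terms of the fractional-part order, `d < T_{i,n} < d+1` is replaced by `T_{i,n} = d+1`. -/
noncomputable def TCond.sucTCond (c : TCond) : TCond :=
  if c.suffixEqAtoms.Nonempty then
    ⟨c.n, (c.atoms \ c.suffixEqAtoms) ∪ c.suffixEqAtoms.image (fun a =>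
      if a.rel = Rel.ge then (⟨a.i, a.j, Rel.gt, a.d⟩ : TCAtom)
      else (⟨a.i, a.j, Rel.lt, a.d + 1⟩ : TCAtom))⟩
  else
    ⟨c.n, (c.atoms \ c.maxFracAtoms) ∪ c.maxFracAtoms.image (fun a =>
      if a.rel = Rel.gt then (⟨a.i, a.j, Rel.ge, a.d + 1⟩ : TCAtom)
      else (⟨a.i, a.j, Rel.le, a.d⟩ : TCAtom))⟩

/-- The discrete immediate exterior `ext_a(p) = (u⋅a, Λ ∧ τ_{n+1} = 0)`. -/
def extA {A : Type} (p : ElemLang A) (a : A) : ElemLang A :=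
  ⟨p.word ++ [a], p.cond.extendZero⟩

/-- The continuous immediate exterior `ext_t(p) = (u, Λᵗ)`. -/
def extT {A : Type} (p : ElemLang A) : ElemLang A :=
  ⟨p.word, p.cond.extTCond⟩

/-- The immediate exterior `ext(p) = ⋃_{a∈Σ} ext_a(p) ∪ ext_t(p)` (as a timed language). -/
def extSet {A : Type} (p : ElemLang A) : Set (TimedWord A) :=
  (⋃ a : A, (extA p a).toSet) ∪ (extT p).toSet

/-- The exterior of a set of elementary languages (as a timed language). -/
def extOf {A : Type} (P : Set (ElemLang A)) : Set (TimedWord A) :=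
  ⋃ p ∈ P, extSet p

/-- The union of a set of elementary languages, as a timed language. -/
def unionOf {A : Type} (P : Set (ElemLang A)) : Set (TimedWord A) :=
  ⋃ p ∈ P, p.toSet

/-- The discrete successor `Suc_a(p) = (u⋅a, Λ ∧ τ_{n+1} = 0)`. -/
def SucA {A : Type} (p : ElemLang A) (a : A) : ElemLang A :=
  ⟨p.word ++ [a], p.cond.extendZero⟩

/-- The continuous successor `Suc_t(p) = (u, Λᵗ)`. -/
noncomputable def SucT {A : Type} (p : ElemLang A) : ElemLang A :=
  ⟨p.word, p.cond.sucTCond⟩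

/-- `Suc(P) = ⋃_{p∈P} Suc(p)`, as a set of elementary languages. -/
def SucSet {A : Type} (P : Set (ElemLang A)) : Set (ElemLang A) :=
  {q | ∃ p ∈ P, (∃ a : A, q = SucA p a) ∨ q = SucT p}

/-- A timed language is chronometric if it is a finite union of pairwise disjoint
elementary languages. -/
def Chronometric {A : Type} (L : Set (TimedWord A)) : Prop :=
  ∃ Ps : Set (ElemLang A), Ps.Finite ∧ (∀ p ∈ Ps, p.WF) ∧
    (Ps.Pairwise fun p q => Disjoint p.toSet q.toSet) ∧ L = unionOf Ps

/-- A set of elementary languages is prefix-closed if it contains (up to language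
equality) all prefixes of its members. -/
def PrefixClosedSet {A : Type} (P : Set (ElemLang A)) : Prop :=
  ∀ p' ∈ P, ∀ p : ElemLang A, p.WF → p.IsPrefixOf p' → ∃ q ∈ P, q.toSet = p.toSet

/-- A tuple `(p, p', R)` defining a chronometric relational morphism. -/
structure MorphTuple (A : Type) where
  src : ElemLang A
  tgt : ElemLang A
  ren : RenamingEq

/-- Well-formedness of a morphism tuple with respect to `P`. -/
def MorphTuple.WF {A : Type} (t : MorphTuple A) (P : Set (ElemLang A)) : Prop :=
  t.src.WF ∧ t.tgt.WF ∧ t.src.toSet ⊆ extOf P ∧ t.tgt.toSet ⊆ unionOf P ∧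
  t.ren.WF ∧ t.ren.n = t.src.word.length ∧ t.ren.n' = t.tgt.word.length

/-- Well-formedness of a finite set `Φ` of tuples defining a chronometric relational
morphism: the sources are pairwise disjoint and their union is `ext(P) ∖ P`. -/
def PhiWF {A : Type} (P : Set (ElemLang A)) (Φ : Set (MorphTuple A)) : Prop :=
  Φ.Finite ∧ (∀ t ∈ Φ, t.WF P) ∧
  (Φ.Pairwise fun t t' => Disjoint t.src.toSet t'.src.toSet) ∧
  (⋃ t ∈ Φ, t.src.toSet) = extOf P \ unionOf P

/-- The chronometric relational morphism `〚Φ〛 ⊆ 𝒯(Σ) × P`, defined inductively. -/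
inductive MorphRel {A : Type} (P : Set (ElemLang A)) (Φ : Set (MorphTuple A)) :
    TimedWord A → TimedWord A → Prop where
  | refl (w : TimedWord A) (hw : w ∈ unionOf P) : MorphRel P Φ w w
  | base (t : MorphTuple A) (ht : t ∈ Φ) (w w' : TimedWord A)
      (hw : w ∈ t.src.toSet) (hw' : w' ∈ t.tgt.toSet)
      (hR : t.ren.Sat w.delays w'.delays) : MorphRel P Φ w w'
  | trans (w wmid wfin wext : TimedWord A) (hw : w ∈ extOf P) (hext : wext.WF)
      (h1 : MorphRel P Φ w wmid)
      (h2 : MorphRel P Φ (wmid.concat wext) wfin) :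
      MorphRel P Φ (w.concat wext) wfin

/-- A timed language is recognizable. -/
def Recognizable {A : Type} (L : Set (TimedWord A)) : Prop :=
  ∃ (P : Set (ElemLang A)) (F : Set (TimedWord A)) (Φ : Set (MorphTuple A)),
    P.Finite ∧ (∀ p ∈ P, p.WF) ∧
    (P.Pairwise fun p q => Disjoint p.toSet q.toSet) ∧
    PrefixClosedSet P ∧
    Chronometric F ∧ F ⊆ unionOf P ∧
    PhiWF P Φ ∧
    (∀ t ∈ Φ, t.tgt.toSet ⊆ F ∨ t.tgt.toSet ∩ F = ∅) ∧
    L = {w | ∃ w' ∈ F, MorphRel P Φ w w'}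

/-- A timed observation table `(P, S, T)`. -/
structure ObsTable (A : Type) where
  P : Set (ElemLang A)
  S : Set (ElemLang A)
  T : ElemLang A → ElemLang A → Set (List ℝ≥0 × List ℝ≥0)

/-- The row indices `P ∪ Suc(P)` of a timed observation table. -/
def ObsTable.rows {A : Type} (O : ObsTable A) : Set (ElemLang A) :=
  O.P ∪ SucSet O.P

/-- Well-formedness of a timed observation table for the target language `L`:
`P` is a prefix-closed finite set of simple elementary languages, `S` is a finite set of
elementary languages, and `T` maps `(p, s) ∈ (P ∪ Suc(P)) × S` to `Sym_L(p⋅s)`. -/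
def ObsTable.WF {A : Type} (O : ObsTable A) (L : Set (TimedWord A)) : Prop :=
  O.P.Finite ∧ (∀ p ∈ O.P, p.WF ∧ p.cond.Simple ∧ p.cond.Canonical) ∧
  (∀ p' ∈ O.P, ∀ p : ElemLang A, p.WF → p.IsPrefixOf p' → ∃ q ∈ O.P, q.toSet = p.toSet) ∧
  O.S.Finite ∧ (∀ s ∈ O.S, s.WF) ∧
  (∀ p ∈ O.rows, ∀ s ∈ O.S, O.T p s = SymPair L p s)

/-- The timed observation table is closed. -/
def ObsTable.Closed {A : Type} (O : ObsTable A) (L : Set (TimedWord A)) : Prop :=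
  ∀ p ∈ SucSet O.P, p ∉ O.P → ∃ p' ∈ O.P, EquivS L O.S p p'

/-- The timed observation table is consistent. -/
def ObsTable.Consistent {A : Type} (O : ObsTable A) (L : Set (TimedWord A)) : Prop :=
  ∀ p ∈ O.P, ∀ p' ∈ O.P, ∀ a : A,
    EquivS L O.S p p' → EquivS L O.S (SucA p a) (SucA p' a)

/-- The timed observation table is exterior-consistent. -/
def ObsTable.ExtConsistent {A : Type} (O : ObsTable A) : Prop :=
  ∀ p ∈ O.P, SucT p ∉ O.P → (SucT p).toSet ⊆ (extT p).toSet

/-- The timed observation table is cohesive. -/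
def ObsTable.Cohesive {A : Type} (O : ObsTable A) (L : Set (TimedWord A)) : Prop :=
  O.Closed L ∧ O.Consistent L ∧ O.ExtConsistent

/-- `Φ` contains, for each `p ∈ P` with `Suc_t(p) ∉ P`, a tuple `(ext_t(p), p', R)` with
`p' ∈ P` and `Suc_t(p) ~^{S,R}_L p'`, and for each `p ∈ P`, `a ∈ Σ` with `Suc_a(p) ∉ P`,
a tuple `(ext_a(p), p', R)` with `p' ∈ P` and `Suc_a(p) ~^{S,R}_L p'`. -/
def GoodPhi {A : Type} (L : Set (TimedWord A)) (O : ObsTable A)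
    (Φ : Set (MorphTuple A)) : Prop :=
  (∀ p ∈ O.P, SucT p ∉ O.P → ∃ t ∈ Φ, t.src = extT p ∧ t.tgt ∈ O.P ∧
    t.ren.WF ∧ t.ren.n = (SucT p).word.length ∧ t.ren.n' = t.tgt.word.length ∧
    EquivSR L O.S t.ren (SucT p) t.tgt) ∧
  (∀ p ∈ O.P, ∀ a : A, SucA p a ∉ O.P → ∃ t ∈ Φ, t.src = extA p a ∧ t.tgt ∈ O.P ∧
    t.ren.WF ∧ t.ren.n = (SucA p a).word.length ∧ t.ren.n' = t.tgt.word.length ∧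
    EquivSR L O.S t.ren (SucA p a) t.tgt)

/-- `F = {p ∈ P | p ⊆ L}`: the accepting prefixes of a timed observation table. -/
def ObsTable.accepting {A : Type} (O : ObsTable A) (L : Set (TimedWord A)) :
    Set (ElemLang A) :=
  {p | p ∈ O.P ∧ p.toSet ⊆ L}

/-- The hypothesis recognizable timed language defined by `(⋃P, ⋃F, Φ)`. -/
def HypLang {A : Type} (L : Set (TimedWord A)) (O : ObsTable A)
    (Φ : Set (MorphTuple A)) : Set (TimedWord A) :=
  {w | ∃ w' ∈ unionOf (O.accepting L), MorphRel O.P Φ w w'}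

/-- The range of values of the sum `T_{i,n}` determined by a timed condition. -/
def rangeOf (c : TCond) (i : ℕ) : Set ℝ≥0 :=
  {x | ∃ v, c.Sat v ∧ sumT v i c.n = x}

/-- The range of values of `T_{i,n} + T''_{0,i''}` under a constraint over two blocks. -/
def pairRangeOf (φ : Set (List ℝ≥0 × List ℝ≥0)) (i n i'' : ℕ) : Set ℝ≥0 :=
  {x | ∃ vv ∈ φ, sumT vv.1 i n + sumT vv.2 0 i'' = x}

/-- The sum `T_{i,|u|} + T''_{0,i''}` is non-trivial in `Sym_L(p⋅p'')`: its range under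
`Sym_L(p⋅p'')` differs from its range under `Λ ∧ Λ''`. -/
def NonTrivial {A : Type} (L : Set (TimedWord A)) (p pDD : ElemLang A)
    (i iDD : ℕ) : Prop :=
  pairRangeOf (SymPair L p pDD) i p.word.length iDD ≠
  pairRangeOf {vv | p.cond.Sat vv.1 ∧ pDD.cond.Sat vv.2} i p.word.length iDD

section Aux

/-! ### sumT lemmas -/

lemma sumT_take (v : List ℝ≥0) (i j : ℕ) : sumT (v.take (j+1)) i j = sumT v i j := by
  unfold sumT
  rw [List.drop_take, List.take_take, min_self]

lemma sumT_append_left (u w : List ℝ≥0) {i j : ℕ} (hj : j + 1 ≤ u.length) :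
    sumT (u ++ w) i j = sumT u i j := by
  rw [← sumT_take (u ++ w) i j, ← sumT_take u i j, List.take_append_of_le_length hj]

lemma sumT_last (u : List ℝ≥0) (x : ℝ≥0) {i n : ℕ} (hu : u.length = n) (hi : i ≤ n) :
    sumT (u ++ [x]) i n = (u.drop i).sum + x := by
  unfold sumT
  rw [List.drop_append_of_le_length (by omega), List.take_of_length_le (by simp; omega),
    List.sum_append]
  simp

lemma sumT_eq_drop_sum (v : List ℝ≥0) {n : ℕ} (hv : v.length = n + 1) (i : ℕ) :
    sumT v i n = (v.drop i).sum := by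
  unfold sumT
  rw [List.take_of_length_le (by simp; omega)]

lemma sumT_split (v : List ℝ≥0) {n i j : ℕ} (hv : v.length = n + 1)
    (hij : i ≤ j) (hjn : j < n) :
    sumT v i n = sumT v i j + sumT v (j+1) n := by
  rw [sumT_eq_drop_sum v hv i, sumT_eq_drop_sum v hv (j+1)]
  unfold sumT
  conv_lhs => rw [← List.take_append_drop (j+1-i) (v.drop i)]
  rw [List.sum_append, List.drop_drop]
  congr 3
  omega

/-! ### Rel interval lemmas -/

lemma rel_bound_lt {e d : ℕ} {x : ℝ≥0} (hx : (d:ℝ≥0) < x) (h : Rel.lt.holds x e) :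
    d + 1 ≤ e := by
  simp only [Rel.holds] at h
  have : (d:ℝ≥0) < (e:ℝ≥0) := lt_trans hx h
  exact_mod_cast this

lemma rel_bound_le {e d : ℕ} {x : ℝ≥0} (hx : (d:ℝ≥0) < x) (h : Rel.le.holds x e) :
    d + 1 ≤ e := by
  simp only [Rel.holds] at h
  have : (d:ℝ≥0) < (e:ℝ≥0) := lt_of_lt_of_le hx h
  exact_mod_cast this

lemma rel_bound_ge {e d : ℕ} {x : ℝ≥0} (hx : x < (d:ℝ≥0) + 1) (h : Rel.ge.holds x e) :
    e ≤ d := by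
  simp only [Rel.holds] at h
  have : (e:ℝ≥0) < ((d:ℕ):ℝ≥0) + 1 := lt_of_le_of_lt h hx
  have : (e:ℝ≥0) < ((d+1:ℕ):ℝ≥0) := by push_cast; exact this
  have := Nat.cast_lt.mp this
  omega

lemma rel_bound_gt {e d : ℕ} {x : ℝ≥0} (hx : x < (d:ℝ≥0) + 1) (h : Rel.gt.holds x e) :
    e ≤ d := by
  simp only [Rel.holds] at h
  have : (e:ℝ≥0) < ((d+1:ℕ):ℝ≥0) := by push_cast; exact lt_trans h hx
  have := Nat.cast_lt.mp this
  omega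

/-- an atom with natural bound holding somewhere in `(d, d+1)` holds everywhere there -/
lemma rel_transfer {r : Rel} {e d : ℕ} {x y : ℝ≥0}
    (hx1 : (d:ℝ≥0) < x) (hx2 : x < (d:ℝ≥0)+1) (hy1 : (d:ℝ≥0) < y) (hy2 : y < (d:ℝ≥0)+1)
    (h : r.holds x e) : r.holds y e := by
  cases r
  · have := rel_bound_lt hx1 h
    simp only [Rel.holds]
    calc y < (d:ℝ≥0)+1 := hy2
    _ ≤ (e:ℝ≥0) := by exact_mod_cast Nat.cast_le.mpr this
  · have := rel_bound_le hx1 h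
    simp only [Rel.holds]
    have he : ((d+1:ℕ):ℝ≥0) ≤ (e:ℝ≥0) := Nat.cast_le.mpr this
    refine le_of_lt (lt_of_lt_of_le hy2 ?_)
    push_cast at he ⊢
    exact he
  · have := rel_bound_ge hx2 h
    simp only [Rel.holds]
    exact le_of_lt (lt_of_le_of_lt (by exact_mod_cast Nat.cast_le.mpr this) hy1)
  · have := rel_bound_gt hx2 h
    simp only [Rel.holds]
    exact lt_of_le_of_lt (by exact_mod_cast Nat.cast_le.mpr this) hy1

end Aux
section Canon

lemma nnreal_not_lt_zero (x : ℝ≥0) : ¬ Rel.lt.holds x 0 := by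
  simp only [Rel.holds, Nat.cast_zero]
  exact not_lt.mpr (zero_le (a := x))

/-- witness for the unsatisfiable case -/
lemma canonUnsat (n : ℕ) : ∃ c' : TCond, c'.n = n ∧ c'.WF ∧ c'.Simple ∧ c'.Canonical ∧
    ∀ v, ¬ c'.Sat v := by
  classical
  refine ⟨⟨n, (Finset.range (n+1) ×ˢ Finset.range (n+1)).biUnion fun q =>
    if q.1 ≤ q.2 then
      ({⟨q.1,q.2,Rel.ge,0⟩, ⟨q.1,q.2,Rel.le,0⟩, ⟨q.1,q.2,Rel.lt,0⟩} : Finset TCAtom)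
    else ∅⟩, rfl, ?_, ?_, ?_, ?_⟩
  · intro a ha
    simp only [Finset.mem_biUnion, Finset.mem_product, Finset.mem_range] at ha
    obtain ⟨q, ⟨hq1, hq2⟩, ha⟩ := ha
    split_ifs at ha with h
    · simp only [Finset.mem_insert, Finset.mem_singleton] at ha
      rcases ha with rfl | rfl | rfl <;> simp <;> omega
    · simp at ha
  · intro i j hij hjn
    have hjn' : j ≤ n := hjn
    refine ⟨0, Or.inr ⟨?_, ?_⟩⟩ <;>
    · simp only [Finset.mem_biUnion, Finset.mem_product, Finset.mem_range]
      exact ⟨(i,j), ⟨by omega, by omega⟩, by simp [hij]⟩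
  · intro a hij hjn _
    have hjn' : a.j ≤ n := hjn
    refine ⟨⟨a.i, a.j, Rel.lt, 0⟩, ?_, rfl, rfl, ?_⟩
    · simp only [Finset.mem_biUnion, Finset.mem_product, Finset.mem_range]
      exact ⟨(a.i, a.j), ⟨by omega, by omega⟩, by simp [hij]⟩
    · intro x hx
      exact absurd hx (nnreal_not_lt_zero x)
  · rintro v ⟨hlen, hsat⟩
    have h00 := hsat ⟨0,0,Rel.lt,0⟩ (by
      simp only [Finset.mem_biUnion, Finset.mem_product, Finset.mem_range]
      exact ⟨(0,0), ⟨by omega, by omega⟩, by simp⟩)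
    exact nnreal_not_lt_zero _ h00

open Classical in
/-- the canonical simple condition built from region data -/
noncomputable def canonAtoms (c : TCond) (f : ℕ → ℕ → ℕ) : Finset TCAtom :=
  (Finset.range (c.n+1) ×ˢ Finset.range (c.n+1)).biUnion fun q =>
    if q.1 ≤ q.2 then
      (if ∀ v, c.Sat v → sumT v q.1 q.2 = (f q.1 q.2 : ℝ≥0) then
        ({⟨q.1,q.2,Rel.ge, f q.1 q.2⟩, ⟨q.1,q.2,Rel.le, f q.1 q.2⟩} : Finset TCAtom)
      else ({⟨q.1,q.2,Rel.gt, f q.1 q.2⟩, ⟨q.1,q.2,Rel.lt, f q.1 q.2 + 1⟩} : Finset TCAtom))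
    else ∅

/-- The master lemma: a satisfiable bounded-region condition is equivalent to a
simple canonical one. -/
lemma canonicalize (c : TCond) (hwf : c.WF) (hne : ∃ v, c.Sat v)
    (hreg : ∀ i j, i ≤ j → j ≤ c.n → ∃ d : ℕ,
      (∀ v, c.Sat v → sumT v i j = (d:ℝ≥0)) ∨
      (∀ v, c.Sat v → (d:ℝ≥0) < sumT v i j ∧ sumT v i j < (d:ℝ≥0)+1)) :
    ∃ c' : TCond, c'.n = c.n ∧ c'.WF ∧ c'.Simple ∧ c'.Canonical ∧
      ∀ v, (c.Sat v ↔ c'.Sat v) := by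
  classical
  obtain ⟨v₀, hv₀⟩ := hne
  set f : ℕ → ℕ → ℕ := fun i j =>
    if h : i ≤ j ∧ j ≤ c.n then (hreg i j h.1 h.2).choose else 0 with hf
  -- the region dichotomy for f, phrased with the decidable test used in canonAtoms
  have hfd : ∀ i j, i ≤ j → j ≤ c.n →
      (∀ v, c.Sat v → sumT v i j = (f i j : ℝ≥0)) ∨
      ((¬ ∀ v, c.Sat v → sumT v i j = (f i j : ℝ≥0)) ∧
        ∀ v, c.Sat v → (f i j : ℝ≥0) < sumT v i j ∧ sumT v i j < (f i j : ℝ≥0)+1) := by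
    intro i j hij hjn
    have : f i j = (hreg i j hij hjn).choose := by
      simp only [hf]; rw [dif_pos ⟨hij, hjn⟩]
    rw [this]
    rcases (hreg i j hij hjn).choose_spec with h | h
    · exact Or.inl h
    · refine Or.inr ⟨?_, h⟩
      intro hall
      have h1 := hall v₀ hv₀
      have h2 := (h v₀ hv₀).1
      rw [h1] at h2
      exact lt_irrefl _ h2
  set c' : TCond := ⟨c.n, canonAtoms c f⟩ with hc'
  -- membership introduction
  have hmem_eq : ∀ i j, i ≤ j → j ≤ c.n → (∀ v, c.Sat v → sumT v i j = (f i j : ℝ≥0)) →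
      (⟨i,j,Rel.ge, f i j⟩ : TCAtom) ∈ c'.atoms ∧ (⟨i,j,Rel.le, f i j⟩ : TCAtom) ∈ c'.atoms := by
    intro i j hij hjn hcase
    constructor <;>
    · show _ ∈ canonAtoms c f
      unfold canonAtoms
      simp only [Finset.mem_biUnion, Finset.mem_product, Finset.mem_range]
      refine ⟨(i,j), ⟨by omega, by omega⟩, ?_⟩
      rw [if_pos hij, if_pos hcase]
      simp
  have hmem_op : ∀ i j, i ≤ j → j ≤ c.n → (¬ ∀ v, c.Sat v → sumT v i j = (f i j : ℝ≥0)) →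
      (⟨i,j,Rel.gt, f i j⟩ : TCAtom) ∈ c'.atoms ∧ (⟨i,j,Rel.lt, f i j + 1⟩ : TCAtom) ∈ c'.atoms := by
    intro i j hij hjn hcase
    constructor <;>
    · show _ ∈ canonAtoms c f
      unfold canonAtoms
      simp only [Finset.mem_biUnion, Finset.mem_product, Finset.mem_range]
      refine ⟨(i,j), ⟨by omega, by omega⟩, ?_⟩
      rw [if_pos hij, if_neg hcase]
      simp
  -- membership elimination
  have hmem_elim : ∀ a : TCAtom, a ∈ c'.atoms → a.i ≤ a.j ∧ a.j ≤ c.n ∧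
      ((a = ⟨a.i, a.j, Rel.ge, f a.i a.j⟩ ∧ ∀ v, c.Sat v → sumT v a.i a.j = (f a.i a.j : ℝ≥0)) ∨
       (a = ⟨a.i, a.j, Rel.le, f a.i a.j⟩ ∧ ∀ v, c.Sat v → sumT v a.i a.j = (f a.i a.j : ℝ≥0)) ∨
       (a = ⟨a.i, a.j, Rel.gt, f a.i a.j⟩ ∧ ¬ ∀ v, c.Sat v → sumT v a.i a.j = (f a.i a.j : ℝ≥0)) ∨
       (a = ⟨a.i, a.j, Rel.lt, f a.i a.j + 1⟩ ∧ ¬ ∀ v, c.Sat v → sumT v a.i a.j = (f a.i a.j : ℝ≥0))) := by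
    intro a ha
    replace ha : a ∈ canonAtoms c f := ha
    unfold canonAtoms at ha
    simp only [Finset.mem_biUnion, Finset.mem_product, Finset.mem_range] at ha
    obtain ⟨q, ⟨hq1, hq2⟩, ha⟩ := ha
    split_ifs at ha with h1 h2
    · simp only [Finset.mem_insert, Finset.mem_singleton] at ha
      rcases ha with rfl | rfl
      · exact ⟨h1, show q.2 ≤ c.n by omega, Or.inl ⟨rfl, h2⟩⟩
      · exact ⟨h1, show q.2 ≤ c.n by omega, Or.inr (Or.inl ⟨rfl, h2⟩)⟩
    · simp only [Finset.mem_insert, Finset.mem_singleton] at ha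
      rcases ha with rfl | rfl
      · exact ⟨h1, show q.2 ≤ c.n by omega, Or.inr (Or.inr (Or.inl ⟨rfl, h2⟩))⟩
      · exact ⟨h1, show q.2 ≤ c.n by omega, Or.inr (Or.inr (Or.inr ⟨rfl, h2⟩))⟩
    · simp at ha
  -- satisfaction transfer c → c'
  have hsat_fwd : ∀ v, c.Sat v → c'.Sat v := by
    intro v hv
    refine ⟨hv.1, ?_⟩
    intro a ha
    obtain ⟨hij, hjn, hcases⟩ := hmem_elim a ha
    rcases hcases with ⟨haeq, hcase⟩ | ⟨haeq, hcase⟩ | ⟨haeq, hcase⟩ | ⟨haeq, hcase⟩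
    · rw [haeq]
      show Rel.ge.holds (sumT v a.i a.j) (f a.i a.j)
      simp only [Rel.holds]
      exact le_of_eq (hcase v hv).symm
    · rw [haeq]
      show Rel.le.holds (sumT v a.i a.j) (f a.i a.j)
      simp only [Rel.holds]
      exact le_of_eq (hcase v hv)
    · rcases hfd _ _ hij hjn with h | ⟨_, h⟩
      · exact absurd h hcase
      · rw [haeq]
        show Rel.gt.holds (sumT v a.i a.j) (f a.i a.j)
        simp only [Rel.holds]
        exact (h v hv).1
    · rcases hfd _ _ hij hjn with h | ⟨_, h⟩
      · exact absurd h hcase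
      · rw [haeq]
        show Rel.lt.holds (sumT v a.i a.j) (f a.i a.j + 1)
        simp only [Rel.holds]
        push_cast
        exact (h v hv).2
  -- key: the value of each sum under a c'-satisfying valuation sits in the region
  have hval : ∀ v, c'.Sat v → ∀ i j, i ≤ j → j ≤ c.n →
      (sumT v i j = (f i j : ℝ≥0) ∧ ∀ w, c.Sat w → sumT w i j = (f i j : ℝ≥0)) ∨
      (((f i j : ℝ≥0) < sumT v i j ∧ sumT v i j < (f i j : ℝ≥0)+1) ∧
        ∀ w, c.Sat w → (f i j : ℝ≥0) < sumT w i j ∧ sumT w i j < (f i j : ℝ≥0)+1) := by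
    intro v hv i j hij hjn
    rcases hfd i j hij hjn with h | ⟨hneg, h⟩
    · obtain ⟨m1, m2⟩ := hmem_eq i j hij hjn h
      have g1 := hv.2 _ m1
      have g2 := hv.2 _ m2
      simp only [Rel.holds] at g1 g2
      exact Or.inl ⟨le_antisymm g2 g1, h⟩
    · obtain ⟨m1, m2⟩ := hmem_op i j hij hjn hneg
      have g1 := hv.2 _ m1
      have g2 := hv.2 _ m2
      simp only [Rel.holds] at g1 g2
      push_cast at g2
      exact Or.inr ⟨⟨g1, g2⟩, h⟩
  -- satisfaction transfer c' → c
  have hsat_bwd : ∀ v, c'.Sat v → c.Sat v := by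
    intro v hv
    refine ⟨hv.1, ?_⟩
    intro a ha
    obtain ⟨hij, hjn⟩ := hwf a ha
    have h0 := hv₀.2 a ha
    rcases hval v hv a.i a.j hij hjn with ⟨hveq, hall⟩ | ⟨⟨hv1, hv2⟩, hall⟩
    · rw [hveq, ← hall v₀ hv₀]
      exact h0
    · obtain ⟨h01, h02⟩ := hall v₀ hv₀
      exact rel_transfer h01 h02 hv1 hv2 h0
  refine ⟨c', rfl, ?_, ?_, ?_, fun v => ⟨hsat_fwd v, hsat_bwd v⟩⟩
  · intro a ha
    obtain ⟨hij, hjn, _⟩ := hmem_elim a ha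
    exact ⟨hij, hjn⟩
  · intro i j hij hjn
    refine ⟨f i j, ?_⟩
    rcases hfd i j hij hjn with h | ⟨hneg, h⟩
    · exact Or.inr (hmem_eq i j hij hjn h)
    · exact Or.inl (hmem_op i j hij hjn hneg)
  · -- canonical
    intro a hij hjn himp
    have hjn' : a.j ≤ c.n := hjn
    have hv₀' := hsat_fwd v₀ hv₀
    have h0 : a.rel.holds (sumT v₀ a.i a.j) a.d := himp v₀ hv₀'
    rcases hval v₀ hv₀' a.i a.j hij hjn' with ⟨hveq, hall⟩ | ⟨⟨hv1, hv2⟩, hall⟩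
    · -- equality region with value f a.i a.j
      obtain ⟨m1, m2⟩ := hmem_eq a.i a.j hij hjn' hall
      rw [hveq] at h0
      cases hr : a.rel
      · rw [hr] at h0
        refine ⟨⟨a.i, a.j, Rel.le, f a.i a.j⟩, m2, rfl, rfl, ?_⟩
        intro x hx
        exact lt_of_le_of_lt hx h0
      · rw [hr] at h0
        refine ⟨⟨a.i, a.j, Rel.le, f a.i a.j⟩, m2, rfl, rfl, ?_⟩
        intro x hx
        exact le_trans hx h0
      · rw [hr] at h0
        refine ⟨⟨a.i, a.j, Rel.ge, f a.i a.j⟩, m1, rfl, rfl, ?_⟩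
        intro x hx
        exact le_trans h0 hx
      · rw [hr] at h0
        refine ⟨⟨a.i, a.j, Rel.ge, f a.i a.j⟩, m1, rfl, rfl, ?_⟩
        intro x hx
        exact lt_of_lt_of_le h0 hx
    · -- open region
      have hneg : ¬ ∀ w, c.Sat w → sumT w a.i a.j = (f a.i a.j : ℝ≥0) := by
        intro hcon
        rw [hcon v₀ hv₀] at hv1
        exact lt_irrefl _ hv1
      obtain ⟨m1, m2⟩ := hmem_op a.i a.j hij hjn' hneg
      cases hr : a.rel
      · rw [hr] at h0
        have hb := rel_bound_lt hv1 h0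
        refine ⟨⟨a.i, a.j, Rel.lt, f a.i a.j + 1⟩, m2, rfl, rfl, ?_⟩
        intro x hx
        show x < (a.d : ℝ≥0)
        refine lt_of_lt_of_le hx ?_
        exact_mod_cast Nat.cast_le.mpr hb
      · rw [hr] at h0
        have hb := rel_bound_le hv1 h0
        refine ⟨⟨a.i, a.j, Rel.lt, f a.i a.j + 1⟩, m2, rfl, rfl, ?_⟩
        intro x hx
        show x ≤ (a.d : ℝ≥0)
        refine le_of_lt (lt_of_lt_of_le hx ?_)
        exact_mod_cast Nat.cast_le.mpr hb
      · rw [hr] at h0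
        have hb := rel_bound_ge hv2 h0
        refine ⟨⟨a.i, a.j, Rel.gt, f a.i a.j⟩, m1, rfl, rfl, ?_⟩
        intro x hx
        show (a.d : ℝ≥0) ≤ x
        exact le_of_lt (lt_of_le_of_lt (Nat.cast_le.mpr hb) hx)
      · rw [hr] at h0
        have hb := rel_bound_gt hv2 h0
        refine ⟨⟨a.i, a.j, Rel.gt, f a.i a.j⟩, m1, rfl, rfl, ?_⟩
        intro x hx
        show (a.d : ℝ≥0) < x
        exact lt_of_le_of_lt (Nat.cast_le.mpr hb) hx
end Canon
section SucAPart

lemma eq_region_of_atoms {c : TCond} {i j d : ℕ}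
    (h1 : (⟨i,j,Rel.ge,d⟩:TCAtom) ∈ c.atoms) (h2 : (⟨i,j,Rel.le,d⟩:TCAtom) ∈ c.atoms) :
    ∀ v, c.Sat v → sumT v i j = (d:ℝ≥0) := fun v hv =>
  le_antisymm (hv.2 _ h2) (hv.2 _ h1)

lemma open_region_of_atoms {c : TCond} {i j d : ℕ}
    (h1 : (⟨i,j,Rel.gt,d⟩:TCAtom) ∈ c.atoms) (h2 : (⟨i,j,Rel.lt,d+1⟩:TCAtom) ∈ c.atoms) :
    ∀ v, c.Sat v → (d:ℝ≥0) < sumT v i j ∧ sumT v i j < (d:ℝ≥0)+1 := fun v hv =>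
  ⟨hv.2 _ h1, by have h := hv.2 _ h2; simp only [Rel.holds] at h; push_cast at h; exact h⟩

lemma extendZero_sat_iff (c : TCond) (hwf : c.WF) (v : List ℝ≥0) :
    c.extendZero.Sat v ↔ ∃ u, c.Sat u ∧ v = u ++ [0] := by
  constructor
  · rintro ⟨hlen, hsat⟩
    have hlen' : v.length = c.n + 2 := hlen
    have hvne : v ≠ [] := by intro h; rw [h] at hlen'; simp at hlen'
    set u := v.dropLast with hu
    set x := v.getLast hvne with hx
    have hvu : v = u ++ [x] := (List.dropLast_append_getLast hvne).symm
    have hulen : u.length = c.n + 1 := by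
      rw [hu, List.length_dropLast, hlen']
      omega
    have hxval : sumT v (c.n+1) (c.n+1) = x := by
      rw [hvu, sumT_last u x hulen (le_refl _)]
      rw [List.drop_of_length_le (le_of_eq hulen)]
      simp
    have hxle := hsat ⟨c.n+1, c.n+1, Rel.le, 0⟩ (by
      simp only [TCond.extendZero, Finset.mem_union, Finset.mem_insert, Finset.mem_singleton]
      tauto)
    simp only [Rel.holds, Nat.cast_zero] at hxle
    rw [hxval] at hxle
    have hx0 : x = 0 := le_antisymm hxle zero_le
    refine ⟨u, ⟨hulen, ?_⟩, by rw [hvu, hx0]⟩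
    intro b hb
    have hble := hwf b hb
    have : sumT v b.i b.j = sumT u b.i b.j := by
      rw [hvu]
      exact sumT_append_left u [x] (by omega)
    rw [← this]
    exact hsat b (by
      simp only [TCond.extendZero, Finset.mem_union]
      exact Or.inl hb)
  · rintro ⟨u, ⟨hulen, husat⟩, rfl⟩
    refine ⟨by simp [TCond.extendZero, hulen], ?_⟩
    intro b hb
    simp only [TCond.extendZero, Finset.mem_union, Finset.mem_insert,
      Finset.mem_singleton] at hb
    have hxval : sumT (u ++ [(0:ℝ≥0)]) (c.n+1) (c.n+1) = 0 := by
      rw [sumT_last u 0 hulen (le_refl _), List.drop_of_length_le (le_of_eq hulen)]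
      simp
    rcases hb with hb | rfl | rfl
    · have hble := hwf b hb
      have : sumT (u ++ [(0:ℝ≥0)]) b.i b.j = sumT u b.i b.j :=
        sumT_append_left u [0] (by omega)
      rw [this]
      exact husat b hb
    · simp only [Rel.holds, hxval]
      simp
    · simp only [Rel.holds, hxval]
      simp

lemma sumT_extend_suffix {c : TCond} (u : List ℝ≥0) (hulen : u.length = c.n + 1)
    {i : ℕ} (hi : i ≤ c.n) :
    sumT (u ++ [(0:ℝ≥0)]) i (c.n + 1) = sumT u i c.n := by
  rw [sumT_last u 0 hulen (by omega), sumT_eq_drop_sum u hulen i]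
  simp

lemma sucA_good {A : Type} (p : ElemLang A) (hp : p.WF) (hS : p.cond.Simple)
    (hC : p.cond.Canonical) (a : A) : (SucA p a).WF ∧ (SucA p a).IsSimple := by
  classical
  obtain ⟨hpn, hpwf, ⟨M, hM⟩⟩ := hp
  have hczn : p.cond.extendZero.n = p.cond.n + 1 := rfl
  have hczwf : p.cond.extendZero.WF := by
    intro b hb
    simp only [TCond.extendZero, Finset.mem_union, Finset.mem_insert,
      Finset.mem_singleton] at hb
    rcases hb with hb | rfl | rfl
    · have := hpwf b hb
      exact ⟨this.1, by have h2 := this.2; show b.j ≤ p.cond.n + 1; omega⟩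
    · exact ⟨le_refl _, le_refl _⟩
    · exact ⟨le_refl _, le_refl _⟩
  constructor
  · refine ⟨?_, hczwf, ?_⟩
    · show p.cond.extendZero.n = (p.word ++ [a]).length
      rw [hczn, hpn]
      simp
    · refine ⟨M, ?_⟩
      intro v hv
      obtain ⟨u, husat, rfl⟩ := (extendZero_sat_iff p.cond hpwf v).mp hv
      rw [List.sum_append]
      simpa using hM u husat
  · by_cases hne : ∃ u, p.cond.Sat u
    · obtain ⟨u₀, hu₀⟩ := hne
      have hreg : ∀ i j, i ≤ j → j ≤ p.cond.extendZero.n → ∃ d : ℕ,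
          (∀ v, p.cond.extendZero.Sat v → sumT v i j = (d:ℝ≥0)) ∨
          (∀ v, p.cond.extendZero.Sat v →
            (d:ℝ≥0) < sumT v i j ∧ sumT v i j < (d:ℝ≥0)+1) := by
        intro i j hij hjn
        have hjn' : j ≤ p.cond.n + 1 := hjn
        rcases Nat.lt_or_ge j (p.cond.n + 1) with hj | hj
        · -- j ≤ n : atoms of c are retained
          obtain ⟨d, hd⟩ := hS i j hij (by omega)
          have hsub : ∀ b : TCAtom, b ∈ p.cond.atoms → b ∈ p.cond.extendZero.atoms := by
            intro b hb
            simp only [TCond.extendZero, Finset.mem_union]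
            exact Or.inl hb
          rcases hd with ⟨hb1, hb2⟩ | ⟨hb1, hb2⟩
          · exact ⟨d, Or.inr (open_region_of_atoms (hsub _ hb1) (hsub _ hb2))⟩
          · exact ⟨d, Or.inl (eq_region_of_atoms (hsub _ hb1) (hsub _ hb2))⟩
        · -- j = n + 1
          have hj' : j = p.cond.n + 1 := by omega
          subst hj'
          rcases Nat.lt_or_ge i (p.cond.n + 1) with hi | hi
          · -- i ≤ n : value equals suffix sum in c
            obtain ⟨d, hd⟩ := hS i p.cond.n (by omega) (le_refl _)
            refine ⟨d, ?_⟩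
            have key : ∀ v, p.cond.extendZero.Sat v →
                sumT v i (p.cond.n + 1) = sumT (v.dropLast) i p.cond.n ∧
                p.cond.Sat v.dropLast := by
              intro v hv
              obtain ⟨u, husat, rfl⟩ := (extendZero_sat_iff p.cond hpwf v).mp hv
              rw [List.dropLast_append_of_ne_nil (by simp)]
              simp only [List.dropLast_singleton, List.append_nil]
              exact ⟨sumT_extend_suffix u husat.1 (by omega), husat⟩
            rcases hd with ⟨hb1, hb2⟩ | ⟨hb1, hb2⟩
            · refine Or.inr ?_
              intro v hv
              obtain ⟨heq, hsatu⟩ := key v hv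
              rw [heq]
              exact open_region_of_atoms hb1 hb2 _ hsatu
            · refine Or.inl ?_
              intro v hv
              obtain ⟨heq, hsatu⟩ := key v hv
              rw [heq]
              exact eq_region_of_atoms hb1 hb2 _ hsatu
          · -- i = j = n+1 : value is 0
            have hi' : i = p.cond.n + 1 := by omega
            subst hi'
            refine ⟨0, Or.inl ?_⟩
            have m1 : (⟨p.cond.n+1, p.cond.n+1, Rel.ge, 0⟩ : TCAtom) ∈
                p.cond.extendZero.atoms := by
              simp only [TCond.extendZero, Finset.mem_union, Finset.mem_insert,
                Finset.mem_singleton]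
              tauto
            have m2 : (⟨p.cond.n+1, p.cond.n+1, Rel.le, 0⟩ : TCAtom) ∈
                p.cond.extendZero.atoms := by
              simp only [TCond.extendZero, Finset.mem_union, Finset.mem_insert,
                Finset.mem_singleton]
              tauto
            exact eq_region_of_atoms m1 m2
      exact canonicalize p.cond.extendZero hczwf
        ⟨u₀ ++ [0], (extendZero_sat_iff p.cond hpwf _).mpr ⟨u₀, hu₀, rfl⟩⟩ hreg
    · obtain ⟨c', h1, h2, h3, h4, h5⟩ := canonUnsat (p.cond.n + 1)
      refine ⟨c', h1, h2, h3, h4, ?_⟩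
      intro v
      constructor
      · intro hv
        obtain ⟨u, husat, rfl⟩ := (extendZero_sat_iff p.cond hpwf v).mp hv
        exact absurd ⟨u, husat⟩ hne
      · intro hv
        exact absurd hv (h5 v)

end SucAPart
section SucTHelpers

lemma fract_open {x : ℝ} {d : ℕ} (h1 : (d:ℝ) < x) (h2 : x < (d:ℝ)+1) :
    Int.fract x = x - (d:ℝ) := by
  have hfl : ⌊x⌋ = (d:ℤ) := by
    rw [Int.floor_eq_iff]
    constructor
    · exact_mod_cast le_of_lt h1
    · push_cast
      exact h2
  have h := Int.floor_add_fract x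
  rw [hfl] at h
  push_cast at h
  linarith

lemma int_gap {a b : ℤ} (h : (a:ℝ) < (b:ℝ)) : (a:ℝ) + 1 ≤ (b:ℝ) := by
  have : a < b := by exact_mod_cast h
  have : a + 1 ≤ b := by omega
  exact_mod_cast this

lemma sumT_bump_lo (u : List ℝ≥0) (x ε : ℝ≥0) {n i j : ℕ} (hu : u.length = n)
    (hj : j < n) : sumT (u ++ [x + ε]) i j = sumT (u ++ [x]) i j := by
  rw [sumT_append_left u [x+ε] (by omega), sumT_append_left u [x] (by omega)]

lemma sumT_bump_hi (u : List ℝ≥0) (x ε : ℝ≥0) {n i : ℕ} (hu : u.length = n)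
    (hi : i ≤ n) : sumT (u ++ [x + ε]) i n = sumT (u ++ [x]) i n + ε := by
  rw [sumT_last u (x+ε) hu hi, sumT_last u x hu hi, add_assoc]

lemma sum_eq_sumT {v : List ℝ≥0} {n : ℕ} (hv : v.length = n + 1) :
    v.sum = sumT v 0 n := by
  rw [sumT_eq_drop_sum v hv 0, List.drop_zero]

lemma sucTCond_n (c : TCond) : c.sucTCond.n = c.n := by
  unfold TCond.sucTCond
  split <;> rfl

/-- membership elimination for suffixEqAtoms, with the equality-region fact -/
lemma mem_suffixEqAtoms_elim {c : TCond} {a : TCAtom} (ha : a ∈ c.suffixEqAtoms) :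
    a ∈ c.atoms ∧ a.j = c.n ∧ (a.rel = Rel.ge ∨ a.rel = Rel.le) ∧
    ∀ v, c.Sat v → sumT v a.i c.n = (a.d : ℝ≥0) := by
  obtain ⟨i, j, r, d⟩ := a
  simp only [TCond.suffixEqAtoms, Finset.mem_filter] at ha
  obtain ⟨hmem, hj, hcase⟩ := ha
  subst hj
  rcases hcase with ⟨hr, hother⟩ | ⟨hr, hother⟩
  · subst hr
    exact ⟨hmem, rfl, Or.inl rfl, eq_region_of_atoms hmem hother⟩
  · subst hr
    exact ⟨hmem, rfl, Or.inr rfl, eq_region_of_atoms hother hmem⟩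

lemma mem_suffixEqAtoms_ge {c : TCond} {i d : ℕ}
    (h1 : (⟨i, c.n, Rel.ge, d⟩:TCAtom) ∈ c.atoms)
    (h2 : (⟨i, c.n, Rel.le, d⟩:TCAtom) ∈ c.atoms) :
    (⟨i, c.n, Rel.ge, d⟩:TCAtom) ∈ c.suffixEqAtoms ∧
    (⟨i, c.n, Rel.le, d⟩:TCAtom) ∈ c.suffixEqAtoms := by
  unfold TCond.suffixEqAtoms
  constructor
  · exact Finset.mem_filter.mpr ⟨h1, rfl, Or.inl ⟨rfl, h2⟩⟩
  · exact Finset.mem_filter.mpr ⟨h2, rfl, Or.inr ⟨rfl, h1⟩⟩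

/-- classification of suffix pairs when there are no suffix equations -/
lemma suffix_open_of_no_eq {c : TCond} (hS : c.Simple) (hE : ¬ c.suffixEqAtoms.Nonempty)
    {i : ℕ} (hi : i ≤ c.n) : ∃ d : ℕ,
    (⟨i, c.n, Rel.gt, d⟩:TCAtom) ∈ c.atoms ∧ (⟨i, c.n, Rel.lt, d+1⟩:TCAtom) ∈ c.atoms := by
  obtain ⟨d, hd⟩ := hS i c.n hi (le_refl _)
  rcases hd with ⟨h1, h2⟩ | ⟨h1, h2⟩
  · exact ⟨d, h1, h2⟩
  · exact absurd ⟨_, (mem_suffixEqAtoms_ge h1 h2).1⟩ hE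

/-- an unsatisfiable canonical condition contains the atom `T_{0,0} < 0` -/
lemma unsat_atom {c : TCond} (hC : c.Canonical) (hne : ¬ ∃ v, c.Sat v) :
    (⟨0, 0, Rel.lt, 0⟩:TCAtom) ∈ c.atoms := by
  obtain ⟨b, hb, hbi, hbj, hsub⟩ := hC ⟨0, 0, Rel.lt, 0⟩ (le_refl _) (Nat.zero_le _)
    (fun v hv => absurd ⟨v, hv⟩ hne)
  obtain ⟨i, j, r, d⟩ := b
  simp only at hbi hbj
  subst hbi; subst hbj
  have hnot : ∀ x : ℝ≥0, ¬ r.holds x d := fun x hx => nnreal_not_lt_zero x (hsub x hx)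
  cases r
  · -- lt : d must be 0
    have hd : d = 0 := by
      by_contra h
      exact hnot 0 (by simp only [Rel.holds]; exact_mod_cast Nat.pos_of_ne_zero h)
    subst hd
    exact hb
  · exact absurd (le_refl (d:ℝ≥0)) (hnot d)
  · exact absurd (le_refl (d:ℝ≥0)) (hnot d)
  · exact absurd (show (d:ℝ≥0) < (d:ℝ≥0)+1 from lt_add_one _) (hnot ((d:ℝ≥0)+1))

end SucTHelpers
section Constancy

lemma fract_constancy (c : TCond) (hS : c.Simple) {i k di dk : ℕ}
    (hi : i ≤ c.n) (hk : k ≤ c.n)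
    (hregi : ∀ v, c.Sat v → (di:ℝ≥0) < sumT v i c.n ∧ sumT v i c.n < (di:ℝ≥0)+1)
    (hregk : ∀ v, c.Sat v → (dk:ℝ≥0) < sumT v k c.n ∧ sumT v k c.n < (dk:ℝ≥0)+1)
    {v₁ v₂ : List ℝ≥0} (h₁ : c.Sat v₁) (h₂ : c.Sat v₂)
    (hlt : Int.fract ((sumT v₁ i c.n : ℝ≥0):ℝ) < Int.fract ((sumT v₁ k c.n : ℝ≥0):ℝ)) :
    Int.fract ((sumT v₂ i c.n : ℝ≥0):ℝ) < Int.fract ((sumT v₂ k c.n : ℝ≥0):ℝ) := by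
  have bi : ∀ v, c.Sat v → (di:ℝ) < ((sumT v i c.n : ℝ≥0):ℝ) ∧
      ((sumT v i c.n : ℝ≥0):ℝ) < (di:ℝ)+1 := by
    intro v hv
    obtain ⟨a1, a2⟩ := hregi v hv
    exact ⟨by exact_mod_cast a1, by exact_mod_cast a2⟩
  have bk : ∀ v, c.Sat v → (dk:ℝ) < ((sumT v k c.n : ℝ≥0):ℝ) ∧
      ((sumT v k c.n : ℝ≥0):ℝ) < (dk:ℝ)+1 := by
    intro v hv
    obtain ⟨a1, a2⟩ := hregk v hv
    exact ⟨by exact_mod_cast a1, by exact_mod_cast a2⟩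
  have fi : ∀ v, (hv : c.Sat v) → Int.fract ((sumT v i c.n : ℝ≥0):ℝ) =
      ((sumT v i c.n : ℝ≥0):ℝ) - (di:ℝ) :=
    fun v hv => fract_open (bi v hv).1 (bi v hv).2
  have fk : ∀ v, (hv : c.Sat v) → Int.fract ((sumT v k c.n : ℝ≥0):ℝ) =
      ((sumT v k c.n : ℝ≥0):ℝ) - (dk:ℝ) :=
    fun v hv => fract_open (bk v hv).1 (bk v hv).2
  rw [fi v₁ h₁, fk v₁ h₁] at hlt
  rw [fi v₂ h₂, fk v₂ h₂]
  rcases lt_trichotomy i k with hik | hik | hik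
  · -- i < k : T_i = S + T_k with S = T_{i,k-1}
    have hsplit : ∀ v, c.Sat v → ((sumT v i c.n : ℝ≥0):ℝ) =
        ((sumT v i (k-1) : ℝ≥0):ℝ) + ((sumT v k c.n : ℝ≥0):ℝ) := by
      intro v hv
      have := sumT_split v hv.1 (show i ≤ k-1 by omega) (show k-1 < c.n by omega)
      rw [show k-1+1 = k by omega] at this
      rw [this]
      push_cast
      ring
    obtain ⟨e, he⟩ := hS i (k-1) (by omega) (by omega)
    rcases he with ⟨hb1, hb2⟩ | ⟨hb1, hb2⟩
    · -- open region for S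
      have hs := open_region_of_atoms hb1 hb2
      have hs1 := hs v₁ h₁
      have hs2 := hs v₂ h₂
      have hs1' : (e:ℝ) < ((sumT v₁ i (k-1) : ℝ≥0):ℝ) ∧
          ((sumT v₁ i (k-1) : ℝ≥0):ℝ) < (e:ℝ)+1 :=
        ⟨by exact_mod_cast hs1.1, by exact_mod_cast hs1.2⟩
      have hs2' : (e:ℝ) < ((sumT v₂ i (k-1) : ℝ≥0):ℝ) ∧
          ((sumT v₂ i (k-1) : ℝ≥0):ℝ) < (e:ℝ)+1 :=
        ⟨by exact_mod_cast hs2.1, by exact_mod_cast hs2.2⟩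
      have key : (e:ℝ) < (di:ℝ) - (dk:ℝ) := by
        have := hsplit v₁ h₁
        linarith [hs1'.1]
      have key2 : (e:ℝ) + 1 ≤ (di:ℝ) - (dk:ℝ) := by
        have := int_gap (a := (e:ℤ)) (b := (di:ℤ) - (dk:ℤ)) (by push_cast; linarith)
        push_cast at this
        linarith
      have := hsplit v₂ h₂
      linarith [hs2'.2]
    · -- equality region for S
      have hs := eq_region_of_atoms hb1 hb2
      have hs1 : ((sumT v₁ i (k-1) : ℝ≥0):ℝ) = (e:ℝ) := by exact_mod_cast hs v₁ h₁
      have hs2 : ((sumT v₂ i (k-1) : ℝ≥0):ℝ) = (e:ℝ) := by exact_mod_cast hs v₂ h₂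
      have e1 := hsplit v₁ h₁
      have e2 := hsplit v₂ h₂
      rw [hs1] at e1
      rw [hs2] at e2
      linarith
  · subst hik
    have b1 := bi v₁ h₁
    have b2 := bk v₁ h₁
    have hdd : di = dk := by
      have h1' : di < dk+1 := by exact_mod_cast lt_trans b1.1 b2.2
      have h2' : dk < di+1 := by exact_mod_cast lt_trans b2.1 b1.2
      omega
    rw [hdd] at hlt
    exact absurd hlt (lt_irrefl _)
  · -- k < i : T_k = S + T_i with S = T_{k,i-1}
    have hsplit : ∀ v, c.Sat v → ((sumT v k c.n : ℝ≥0):ℝ) =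
        ((sumT v k (i-1) : ℝ≥0):ℝ) + ((sumT v i c.n : ℝ≥0):ℝ) := by
      intro v hv
      have := sumT_split v hv.1 (show k ≤ i-1 by omega) (show i-1 < c.n by omega)
      rw [show i-1+1 = i by omega] at this
      rw [this]
      push_cast
      ring
    obtain ⟨e, he⟩ := hS k (i-1) (by omega) (by omega)
    rcases he with ⟨hb1, hb2⟩ | ⟨hb1, hb2⟩
    · have hs := open_region_of_atoms hb1 hb2
      have hs1 := hs v₁ h₁
      have hs2 := hs v₂ h₂
      have hs1' : (e:ℝ) < ((sumT v₁ k (i-1) : ℝ≥0):ℝ) ∧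
          ((sumT v₁ k (i-1) : ℝ≥0):ℝ) < (e:ℝ)+1 :=
        ⟨by exact_mod_cast hs1.1, by exact_mod_cast hs1.2⟩
      have hs2' : (e:ℝ) < ((sumT v₂ k (i-1) : ℝ≥0):ℝ) ∧
          ((sumT v₂ k (i-1) : ℝ≥0):ℝ) < (e:ℝ)+1 :=
        ⟨by exact_mod_cast hs2.1, by exact_mod_cast hs2.2⟩
      have key : (dk:ℝ) - (di:ℝ) < (e:ℝ) + 1 := by
        have := hsplit v₁ h₁
        linarith [hs1'.2]
      have key2 : (dk:ℝ) - (di:ℝ) ≤ (e:ℝ) := by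
        have := int_gap (a := (dk:ℤ) - (di:ℤ)) (b := (e:ℤ) + 1) (by push_cast; linarith)
        push_cast at this
        linarith
      have := hsplit v₂ h₂
      linarith [hs2'.1]
    · have hs := eq_region_of_atoms hb1 hb2
      have hs1 : ((sumT v₁ k (i-1) : ℝ≥0):ℝ) = (e:ℝ) := by exact_mod_cast hs v₁ h₁
      have hs2 : ((sumT v₂ k (i-1) : ℝ≥0):ℝ) = (e:ℝ) := by exact_mod_cast hs v₂ h₂
      have e1 := hsplit v₁ h₁
      have e2 := hsplit v₂ h₂
      rw [hs1] at e1
      rw [hs2] at e2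
      linarith

end Constancy
section SucTUnsat

lemma not_mem_E_of_rel {c : TCond} {b : TCAtom}
    (h : b.rel = Rel.gt ∨ b.rel = Rel.lt ∨ b.j ≠ c.n) : b ∉ c.suffixEqAtoms := by
  intro hmem
  obtain ⟨_, hj, hr, _⟩ := mem_suffixEqAtoms_elim hmem
  rcases hr with hr | hr <;> rcases h with h | h | h <;> simp_all

lemma not_mem_M_of_j {c : TCond} {b : TCAtom} (h : b.j ≠ c.n) : b ∉ c.maxFracAtoms := by
  intro hmem
  simp only [TCond.maxFracAtoms, Finset.mem_filter] at hmem
  exact h hmem.2.1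

lemma not_mem_M_of_rel {c : TCond} {b : TCAtom}
    (h : b.rel = Rel.ge ∨ b.rel = Rel.le) : b ∉ c.maxFracAtoms := by
  intro hmem
  simp only [TCond.maxFracAtoms, Finset.mem_filter] at hmem
  rcases hmem.2.2.1 with hr | hr <;> rcases h with h | h <;> simp_all

lemma sucT_branch1_eq {c : TCond} (hE : c.suffixEqAtoms.Nonempty) :
    c.sucTCond = ⟨c.n, (c.atoms \ c.suffixEqAtoms) ∪ c.suffixEqAtoms.image (fun a =>
      if a.rel = Rel.ge then (⟨a.i, a.j, Rel.gt, a.d⟩ : TCAtom)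
      else (⟨a.i, a.j, Rel.lt, a.d + 1⟩ : TCAtom))⟩ := by
  unfold TCond.sucTCond
  rw [if_pos hE]

lemma sucT_branch2_eq {c : TCond} (hE : ¬ c.suffixEqAtoms.Nonempty) :
    c.sucTCond = ⟨c.n, (c.atoms \ c.maxFracAtoms) ∪ c.maxFracAtoms.image (fun a =>
      if a.rel = Rel.gt then (⟨a.i, a.j, Rel.ge, a.d + 1⟩ : TCAtom)
      else (⟨a.i, a.j, Rel.le, a.d⟩ : TCAtom))⟩ := by
  unfold TCond.sucTCond
  rw [if_neg hE]

lemma sucT_unsat (c : TCond) (hS : c.Simple) (hC : c.Canonical)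
    (hne : ¬ ∃ v, c.Sat v) : ∀ v, ¬ c.sucTCond.Sat v := by
  classical
  have hb0 := unsat_atom hC hne
  intro v hv
  by_cases hE : c.suffixEqAtoms.Nonempty
  · rw [sucT_branch1_eq hE] at hv
    exact nnreal_not_lt_zero _ (hv.2 _ (Finset.mem_union_left _ (Finset.mem_sdiff.mpr
        ⟨hb0, not_mem_E_of_rel (Or.inr (Or.inl rfl))⟩)))
  · rw [sucT_branch2_eq hE] at hv
    by_cases hn0 : c.n = 0
    · -- n = 0 : all atoms are suffix atoms
      obtain ⟨d₀, hgt, hlt⟩ := suffix_open_of_no_eq hS hE (Nat.zero_le _)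
      have hmf : c.MaxFracIdx 0 :=
        ⟨Nat.zero_le _, fun w hw => absurd ⟨w, hw⟩ hne⟩
      have hmemgt : (⟨0, c.n, Rel.gt, d₀⟩:TCAtom) ∈ c.maxFracAtoms := by
        unfold TCond.maxFracAtoms
        exact Finset.mem_filter.mpr ⟨hgt, rfl, Or.inl rfl, hmf⟩
      have hmemlt : (⟨0, 0, Rel.lt, 0⟩:TCAtom) ∈ c.maxFracAtoms := by
        unfold TCond.maxFracAtoms
        exact Finset.mem_filter.mpr ⟨hb0, hn0.symm, Or.inr rfl, hmf⟩
      have himg1 : (⟨0, c.n, Rel.ge, d₀+1⟩:TCAtom) ∈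
          (c.atoms \ c.maxFracAtoms) ∪ c.maxFracAtoms.image (fun a =>
            if a.rel = Rel.gt then (⟨a.i, a.j, Rel.ge, a.d + 1⟩ : TCAtom)
            else (⟨a.i, a.j, Rel.le, a.d⟩ : TCAtom)) := by
        refine Finset.mem_union_right _ ?_
        refine Finset.mem_image.mpr ⟨_, hmemgt, ?_⟩
        simp
      have himg2 : (⟨0, 0, Rel.le, 0⟩:TCAtom) ∈
          (c.atoms \ c.maxFracAtoms) ∪ c.maxFracAtoms.image (fun a =>
            if a.rel = Rel.gt then (⟨a.i, a.j, Rel.ge, a.d + 1⟩ : TCAtom)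
            else (⟨a.i, a.j, Rel.le, a.d⟩ : TCAtom)) := by
        refine Finset.mem_union_right _ ?_
        refine Finset.mem_image.mpr ⟨_, hmemlt, ?_⟩
        simp
      have h1 := hv.2 _ himg1
      have h2 := hv.2 _ himg2
      simp only [Rel.holds] at h1 h2
      rw [hn0] at h1
      have hle : sumT v 0 0 ≤ 0 := by exact_mod_cast h2
      have hc : ((d₀+1:ℕ):ℝ≥0) ≤ 0 := le_trans h1 hle
      have : d₀ + 1 = 0 := by exact_mod_cast le_antisymm hc zero_le
      omega
    · exact nnreal_not_lt_zero _ (hv.2 _ (Finset.mem_union_left _ (Finset.mem_sdiff.mpr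
          ⟨hb0, not_mem_M_of_j (show (0:ℕ) ≠ c.n from fun h => hn0 h.symm)⟩)))

end SucTUnsat
section SucTBranch1

lemma holds_bump_eq {r : Rel} {e d : ℕ} {ε : ℝ≥0} (hε1 : 0 < ε) (hε2 : ε < 1)
    (h : r.holds (d:ℝ≥0) e) (hne : ¬(r = Rel.le ∧ e = d)) :
    r.holds ((d:ℝ≥0)+ε) e := by
  cases r
  · -- lt
    simp only [Rel.holds] at h ⊢
    have : d < e := by exact_mod_cast h
    have h1 : ((d:ℝ≥0))+ε < (d:ℝ≥0)+1 := add_lt_add_right hε2 _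
    refine lt_of_lt_of_le h1 ?_
    have : ((d+1:ℕ):ℝ≥0) ≤ (e:ℕ) := Nat.cast_le.mpr (by omega)
    push_cast at this
    exact this
  · -- le
    simp only [Rel.holds] at h ⊢
    have hde : d ≤ e := by exact_mod_cast h
    have hdne : e ≠ d := fun hc => hne ⟨rfl, hc⟩
    have h1 : ((d:ℝ≥0))+ε < (d:ℝ≥0)+1 := add_lt_add_right hε2 _
    refine le_of_lt (lt_of_lt_of_le h1 ?_)
    have : ((d+1:ℕ):ℝ≥0) ≤ (e:ℕ) := Nat.cast_le.mpr (by omega)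
    push_cast at this
    exact this
  · -- ge
    simp only [Rel.holds] at h ⊢
    exact le_trans h le_self_add
  · -- gt
    simp only [Rel.holds] at h ⊢
    exact lt_of_lt_of_le h le_self_add

lemma sucT_branch1 (c : TCond) (hwf : c.WF) (hS : c.Simple)
    (hE : c.suffixEqAtoms.Nonempty) {v₀ : List ℝ≥0} (hv₀ : c.Sat v₀) :
    (∃ w, c.sucTCond.Sat w) ∧
    (∀ i j, i ≤ j → j ≤ c.n → ∃ d : ℕ,
      (∀ v, c.sucTCond.Sat v → sumT v i j = (d:ℝ≥0)) ∨
      (∀ v, c.sucTCond.Sat v → (d:ℝ≥0) < sumT v i j ∧ sumT v i j < (d:ℝ≥0)+1)) := by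
  classical
  have hlen : v₀.length = c.n + 1 := hv₀.1
  have hvne : v₀ ≠ [] := by intro h; rw [h] at hlen; simp at hlen
  set u := v₀.dropLast with hu
  set x := v₀.getLast hvne with hx
  have hvu : v₀ = u ++ [x] := (List.dropLast_append_getLast hvne).symm
  have hulen : u.length = c.n := by rw [hu, List.length_dropLast, hlen]; omega
  -- classification of suffix pairs
  have hclass : ∀ i : ℕ, ∃ d : ℕ, i ≤ c.n →
      ((⟨i,c.n,Rel.gt,d⟩:TCAtom) ∈ c.atoms ∧ (⟨i,c.n,Rel.lt,d+1⟩:TCAtom) ∈ c.atoms) ∨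
      ((⟨i,c.n,Rel.ge,d⟩:TCAtom) ∈ c.atoms ∧ (⟨i,c.n,Rel.le,d⟩:TCAtom) ∈ c.atoms) := by
    intro i
    by_cases hi : i ≤ c.n
    · obtain ⟨d, hd⟩ := hS i c.n hi le_rfl
      exact ⟨d, fun _ => hd⟩
    · exact ⟨0, fun h => absurd h hi⟩
  choose D hD using hclass
  -- the gap to the next region boundary
  set gap : ℕ → ℝ≥0 := fun i =>
    if (⟨i,c.n,Rel.gt,D i⟩:TCAtom) ∈ c.atoms ∧ (⟨i,c.n,Rel.lt,D i + 1⟩:TCAtom) ∈ c.atoms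
    then ((D i:ℝ≥0) + 1) - sumT v₀ i c.n else 1 with hgap
  have hgap_pos : ∀ i ∈ Finset.range (c.n+1), 0 < gap i := by
    intro i hi
    simp only [hgap]
    split_ifs with h
    · exact tsub_pos_of_lt (open_region_of_atoms h.1 h.2 v₀ hv₀).2
    · norm_num
  set ε : ℝ≥0 :=
    ((Finset.range (c.n+1)).inf' ⟨0, Finset.mem_range.mpr (Nat.succ_pos _)⟩ gap) / 2 ⊓ 2⁻¹
    with hε
  have hinf_pos : 0 <
      (Finset.range (c.n+1)).inf' ⟨0, Finset.mem_range.mpr (Nat.succ_pos _)⟩ gap := by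
    refine (Finset.lt_inf'_iff _).mpr ?_
    exact hgap_pos
  have hε_pos : 0 < ε := by
    rw [hε]
    refine lt_min ?_ (by norm_num)
    positivity
  have hε_lt1 : ε < 1 := by
    rw [hε]
    refine lt_of_le_of_lt (min_le_right _ _) ?_
    rw [← NNReal.coe_lt_coe]
    norm_num
  have hε_gap : ∀ i, i ≤ c.n → ε < gap i := by
    intro i hi
    have h1 : ε ≤ ((Finset.range (c.n+1)).inf'
        ⟨0, Finset.mem_range.mpr (Nat.succ_pos _)⟩ gap) / 2 := by
      rw [hε]; exact min_le_left _ _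
    have h2 : (Finset.range (c.n+1)).inf'
        ⟨0, Finset.mem_range.mpr (Nat.succ_pos _)⟩ gap ≤ gap i :=
      Finset.inf'_le gap (Finset.mem_range.mpr (by omega))
    have h3 : ((Finset.range (c.n+1)).inf'
        ⟨0, Finset.mem_range.mpr (Nat.succ_pos _)⟩ gap) / 2 ≤ gap i / 2 := by gcongr
    refine lt_of_le_of_lt (le_trans h1 h3) ?_
    exact NNReal.half_lt_self (ne_of_gt (hgap_pos i (Finset.mem_range.mpr (by omega))))
  -- the bumped valuation
  set w := u ++ [x + ε] with hw
  have hwlen : w.length = c.n + 1 := by rw [hw]; simp [hulen]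
  have hbl : ∀ i j : ℕ, j < c.n → sumT w i j = sumT v₀ i j := by
    intro i j hj
    rw [hw, hvu]
    exact sumT_bump_lo u x ε hulen hj
  have hbh : ∀ i : ℕ, i ≤ c.n → sumT w i c.n = sumT v₀ i c.n + ε := by
    intro i hi
    rw [hw, hvu]
    exact sumT_bump_hi u x ε hulen hi
  constructor
  · -- satisfiability
    refine ⟨w, ?_⟩
    rw [sucT_branch1_eq hE]
    refine ⟨hwlen, ?_⟩
    intro b hb
    rcases Finset.mem_union.mp hb with hb | hb
    · obtain ⟨hbmem, hbE⟩ := Finset.mem_sdiff.mp hb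
      obtain ⟨hbij, hbjn⟩ := hwf b hbmem
      have hold := hv₀.2 b hbmem
      rcases Nat.lt_or_ge b.j c.n with hj | hj
      · rw [hbl b.i b.j hj]
        exact hold
      · have hbj : b.j = c.n := le_antisymm hbjn hj
        rw [hbj, hbh b.i (by omega)]
        rw [hbj] at hold
        rcases hD b.i (by omega) with ⟨hgt, hlt⟩ | ⟨hge, hle⟩
        · have hop := open_region_of_atoms hgt hlt v₀ hv₀
          have hub : sumT v₀ b.i c.n + ε < (D b.i:ℝ≥0)+1 := by
            have h1 : ε < gap b.i := hε_gap _ (by omega)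
            simp only [hgap] at h1
            rw [if_pos ⟨hgt, hlt⟩] at h1
            calc sumT v₀ b.i c.n + ε
                < sumT v₀ b.i c.n + (((D b.i:ℝ≥0) + 1) - sumT v₀ b.i c.n) :=
                  add_lt_add_right h1 _
              _ = (D b.i:ℝ≥0)+1 := add_tsub_cancel_of_le (le_of_lt hop.2)
          exact rel_transfer hop.1 hop.2 (lt_of_lt_of_le hop.1 le_self_add) hub hold
        · have hveq := eq_region_of_atoms hge hle v₀ hv₀
          rw [hveq] at hold ⊢
          refine holds_bump_eq hε_pos hε_lt1 hold ?_
          rintro ⟨hrel, hdd⟩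
          apply hbE
          unfold TCond.suffixEqAtoms
          refine Finset.mem_filter.mpr ⟨hbmem, hbj, Or.inr ⟨hrel, ?_⟩⟩
          rw [hbj, hdd]
          exact hge
    · obtain ⟨aE, haE, hfa⟩ := Finset.mem_image.mp hb
      obtain ⟨haMem, haj, har, hval⟩ := mem_suffixEqAtoms_elim haE
      obtain ⟨haij, _⟩ := hwf aE haMem
      subst hfa
      rcases har with har | har
      · rw [if_pos har]
        show Rel.gt.holds (sumT w aE.i aE.j) aE.d
        rw [haj, hbh aE.i (by omega), hval v₀ hv₀]
        simp only [Rel.holds]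
        exact lt_add_of_pos_right _ hε_pos
      · rw [if_neg (by rw [har]; simp)]
        show Rel.lt.holds (sumT w aE.i aE.j) (aE.d+1)
        rw [haj, hbh aE.i (by omega), hval v₀ hv₀]
        simp only [Rel.holds]
        push_cast
        exact add_lt_add_right hε_lt1 _
  · -- region property
    intro i j hij hjn
    rcases Nat.lt_or_ge j c.n with hj | hj
    · obtain ⟨d, hd⟩ := hS i j hij (by omega)
      rcases hd with ⟨h1, h2⟩ | ⟨h1, h2⟩
      · refine ⟨d, Or.inr (open_region_of_atoms ?_ ?_)⟩ <;>
        · rw [sucT_branch1_eq hE]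
          refine Finset.mem_union_left _ (Finset.mem_sdiff.mpr
            ⟨by assumption, not_mem_E_of_rel (Or.inr (Or.inr (by simp; omega)))⟩)
      · refine ⟨d, Or.inl (eq_region_of_atoms ?_ ?_)⟩ <;>
        · rw [sucT_branch1_eq hE]
          refine Finset.mem_union_left _ (Finset.mem_sdiff.mpr
            ⟨by assumption, not_mem_E_of_rel (Or.inr (Or.inr (by simp; omega)))⟩)
    · have hj' : j = c.n := by omega
      subst hj'
      rcases hD i (by omega) with ⟨hgt, hlt⟩ | ⟨hge, hle⟩
      · refine ⟨D i, Or.inr (open_region_of_atoms ?_ ?_)⟩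
        · rw [sucT_branch1_eq hE]
          exact Finset.mem_union_left _ (Finset.mem_sdiff.mpr
            ⟨hgt, not_mem_E_of_rel (Or.inl rfl)⟩)
        · rw [sucT_branch1_eq hE]
          exact Finset.mem_union_left _ (Finset.mem_sdiff.mpr
            ⟨hlt, not_mem_E_of_rel (Or.inr (Or.inl rfl))⟩)
      · obtain ⟨hgeE, hleE⟩ := mem_suffixEqAtoms_ge hge hle
        refine ⟨D i, Or.inr (open_region_of_atoms ?_ ?_)⟩
        · rw [sucT_branch1_eq hE]
          refine Finset.mem_union_right _ (Finset.mem_image.mpr ⟨_, hgeE, ?_⟩)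
          simp
        · rw [sucT_branch1_eq hE]
          refine Finset.mem_union_right _ (Finset.mem_image.mpr ⟨_, hleE, ?_⟩)
          simp

end SucTBranch1
section SucTBranch2

lemma mem_maxFracAtoms_elim {c : TCond} {a : TCAtom} (ha : a ∈ c.maxFracAtoms) :
    a ∈ c.atoms ∧ a.j = c.n ∧ (a.rel = Rel.gt ∨ a.rel = Rel.lt) ∧ c.MaxFracIdx a.i := by
  classical
  unfold TCond.maxFracAtoms at ha
  rw [Finset.mem_filter] at ha
  exact ⟨ha.1, ha.2⟩

lemma sucT_branch2 (c : TCond) (hwf : c.WF) (hS : c.Simple)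
    (hE : ¬ c.suffixEqAtoms.Nonempty) {v₀ : List ℝ≥0} (hv₀ : c.Sat v₀) :
    (∃ w, c.sucTCond.Sat w) ∧
    (∀ i j, i ≤ j → j ≤ c.n → ∃ d : ℕ,
      (∀ v, c.sucTCond.Sat v → sumT v i j = (d:ℝ≥0)) ∨
      (∀ v, c.sucTCond.Sat v → (d:ℝ≥0) < sumT v i j ∧ sumT v i j < (d:ℝ≥0)+1)) := by
  classical
  -- all suffix pairs are open
  have hclass : ∀ i : ℕ, ∃ d : ℕ, i ≤ c.n →
      ((⟨i,c.n,Rel.gt,d⟩:TCAtom) ∈ c.atoms ∧ (⟨i,c.n,Rel.lt,d+1⟩:TCAtom) ∈ c.atoms) := by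
    intro i
    by_cases hi : i ≤ c.n
    · obtain ⟨d, hd⟩ := suffix_open_of_no_eq hS hE hi
      exact ⟨d, fun _ => hd⟩
    · exact ⟨0, fun h => absurd h hi⟩
  choose D hD using hclass
  have hreg : ∀ i, i ≤ c.n → ∀ v, c.Sat v →
      (D i:ℝ≥0) < sumT v i c.n ∧ sumT v i c.n < (D i:ℝ≥0)+1 :=
    fun i hi => open_region_of_atoms (hD i hi).1 (hD i hi).2
  have hregR : ∀ i, i ≤ c.n → ∀ v, c.Sat v →
      (D i:ℝ) < ((sumT v i c.n : ℝ≥0):ℝ) ∧ ((sumT v i c.n : ℝ≥0):ℝ) < (D i:ℝ)+1 := by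
    intro i hi v hv
    obtain ⟨a1, a2⟩ := hreg i hi v hv
    exact ⟨by exact_mod_cast a1, by exact_mod_cast a2⟩
  have hfr : ∀ i, i ≤ c.n → ∀ v, c.Sat v →
      Int.fract ((sumT v i c.n : ℝ≥0):ℝ) = ((sumT v i c.n : ℝ≥0):ℝ) - (D i:ℝ) :=
    fun i hi v hv => fract_open (hregR i hi v hv).1 (hregR i hi v hv).2
  by_cases hM : c.maxFracAtoms.Nonempty
  · -- there is a maximal-fraction suffix index
    obtain ⟨astar, hastar⟩ := hM
    obtain ⟨hasMem, hasj, hasrel, hasmf⟩ := mem_maxFracAtoms_elim hastar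
    set i₀ := astar.i with hi₀
    have hi₀n : i₀ ≤ c.n := hasmf.1
    have hmax : ∀ v, c.Sat v → ∀ k, k ≤ c.n →
        Int.fract ((sumT v k c.n : ℝ≥0):ℝ) ≤ Int.fract ((sumT v i₀ c.n : ℝ≥0):ℝ) :=
      hasmf.2
    -- the bump amount
    have hlen : v₀.length = c.n + 1 := hv₀.1
    have hvne : v₀ ≠ [] := by intro h; rw [h] at hlen; simp at hlen
    set u := v₀.dropLast with hu
    set x := v₀.getLast hvne with hx
    have hvu : v₀ = u ++ [x] := (List.dropLast_append_getLast hvne).symm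
    have hulen : u.length = c.n := by rw [hu, List.length_dropLast, hlen]; omega
    set T₀ := sumT v₀ i₀ c.n with hT₀
    have hT₀reg := hreg i₀ hi₀n v₀ hv₀
    set ε : ℝ≥0 := ((D i₀:ℝ≥0)+1) - T₀ with hε
    have hT₀le : T₀ ≤ (D i₀:ℝ≥0)+1 := le_of_lt hT₀reg.2
    have hεR : (ε:ℝ) = (D i₀:ℝ)+1 - ((T₀:ℝ≥0):ℝ) := by
      rw [hε, NNReal.coe_sub hT₀le]
      push_cast
      ring
    have hε_pos : 0 < ε := tsub_pos_of_lt hT₀reg.2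
    have hε_lt1 : ε < 1 := by
      rw [hε]
      rw [tsub_lt_iff_left hT₀le]
      have h := add_lt_add_left hT₀reg.1 1
      first
      | exact h
      | (rw [add_comm]; exact h)
      | (rw [add_comm] at h; exact h)
    set w := u ++ [x + ε] with hw
    have hwlen : w.length = c.n + 1 := by rw [hw]; simp [hulen]
    have hbl : ∀ i j : ℕ, j < c.n → sumT w i j = sumT v₀ i j := by
      intro i j hj
      rw [hw, hvu]
      exact sumT_bump_lo u x ε hulen hj
    have hbh : ∀ i : ℕ, i ≤ c.n → sumT w i c.n = sumT v₀ i c.n + ε := by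
      intro i hi
      rw [hw, hvu]
      exact sumT_bump_hi u x ε hulen hi
    -- exact hit for maximal-fraction indices
    have heq : ∀ k, k ≤ c.n → c.MaxFracIdx k → sumT w k c.n = (D k:ℝ≥0)+1 := by
      intro k hk hmfk
      have h1 : Int.fract ((sumT v₀ k c.n : ℝ≥0):ℝ) =
          Int.fract ((sumT v₀ i₀ c.n : ℝ≥0):ℝ) :=
        le_antisymm (hmax v₀ hv₀ k hk) (hmfk.2 v₀ hv₀ i₀ hi₀n)
      rw [hfr k hk v₀ hv₀, hfr i₀ hi₀n v₀ hv₀] at h1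
      rw [hbh k hk]
      have : ((sumT v₀ k c.n + ε : ℝ≥0):ℝ) = (((D k:ℝ≥0)+1 : ℝ≥0):ℝ) := by
        push_cast
        rw [hεR]
        push_cast
        linarith
      exact_mod_cast this
    -- strict bound for non-maximal indices
    have hstrict : ∀ k, k ≤ c.n → ¬ c.MaxFracIdx k →
        (D k:ℝ≥0) < sumT w k c.n ∧ sumT w k c.n < (D k:ℝ≥0)+1 := by
      intro k hk hnk
      have hlt0 : Int.fract ((sumT v₀ k c.n : ℝ≥0):ℝ) <
          Int.fract ((sumT v₀ i₀ c.n : ℝ≥0):ℝ) := by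
        unfold TCond.MaxFracIdx at hnk
        push_neg at hnk
        obtain ⟨v₁, hv₁, k₂, hk₂, hgt₂⟩ := hnk hk
        have hlt₁ : Int.fract ((sumT v₁ k c.n : ℝ≥0):ℝ) <
            Int.fract ((sumT v₁ i₀ c.n : ℝ≥0):ℝ) :=
          lt_of_lt_of_le hgt₂ (hmax v₁ hv₁ k₂ hk₂)
        exact fract_constancy c hS hk hi₀n
          (fun v hv => hreg k hk v hv) (fun v hv => hreg i₀ hi₀n v hv) hv₁ hv₀ hlt₁
      rw [hfr k hk v₀ hv₀, hfr i₀ hi₀n v₀ hv₀] at hlt0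
      have hkreg := hregR k hk v₀ hv₀
      constructor
      · rw [hbh k hk]
        exact lt_of_lt_of_le (hreg k hk v₀ hv₀).1 le_self_add
      · rw [hbh k hk]
        have : ((sumT v₀ k c.n + ε : ℝ≥0):ℝ) < (D k:ℝ)+1 := by
          push_cast
          rw [hεR]
          linarith
        have h2 : ((sumT v₀ k c.n + ε : ℝ≥0):ℝ) < (((D k:ℝ≥0)+1 : ℝ≥0):ℝ) := by
          push_cast
          push_cast at this
          linarith
        exact_mod_cast h2
    constructor
    · -- satisfiability
      refine ⟨w, ?_⟩
      rw [sucT_branch2_eq hE]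
      refine ⟨hwlen, ?_⟩
      intro b hb
      rcases Finset.mem_union.mp hb with hb | hb
      · obtain ⟨hbmem, hbM⟩ := Finset.mem_sdiff.mp hb
        obtain ⟨hbij, hbjn⟩ := hwf b hbmem
        have hold := hv₀.2 b hbmem
        rcases Nat.lt_or_ge b.j c.n with hj | hj
        · rw [hbl b.i b.j hj]
          exact hold
        · have hbj : b.j = c.n := le_antisymm hbjn hj
          rw [hbj] at hold ⊢
          have hbi : b.i ≤ c.n := by omega
          have hbreg := hreg b.i hbi v₀ hv₀
          by_cases hmfb : c.MaxFracIdx b.i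
          · -- b must be a ge/le atom; value hits D b.i + 1
            rw [heq b.i hbi hmfb]
            cases hrb : b.rel
            · -- lt is impossible: b would be in M
              exfalso
              apply hbM
              unfold TCond.maxFracAtoms
              exact Finset.mem_filter.mpr ⟨hbmem, hbj, Or.inr hrb, hmfb⟩
            · -- le
              rw [hrb] at hold
              have := rel_bound_le hbreg.1 hold
              show ((D b.i:ℝ≥0)+1) ≤ (b.d:ℝ≥0)
              have h2 : ((D b.i+1:ℕ):ℝ≥0) ≤ (b.d:ℝ≥0) := Nat.cast_le.mpr this
              push_cast at h2
              exact h2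
            · -- ge
              rw [hrb] at hold
              have := rel_bound_ge hbreg.2 hold
              show (b.d:ℝ≥0) ≤ (D b.i:ℝ≥0)+1
              have h2 : (b.d:ℝ≥0) ≤ ((D b.i:ℕ):ℝ≥0) := Nat.cast_le.mpr this
              exact le_trans h2 le_self_add
            · -- gt is impossible: b would be in M
              exfalso
              apply hbM
              unfold TCond.maxFracAtoms
              exact Finset.mem_filter.mpr ⟨hbmem, hbj, Or.inl hrb, hmfb⟩
          · -- stays in the open region
            obtain ⟨hs1, hs2⟩ := hstrict b.i hbi hmfb
            exact rel_transfer hbreg.1 hbreg.2 hs1 hs2 hold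
      · obtain ⟨aM, haM, hfa⟩ := Finset.mem_image.mp hb
        obtain ⟨haMem, haj, harel, hamf⟩ := mem_maxFracAtoms_elim haM
        have hai : aM.i ≤ c.n := hamf.1
        have hold := hv₀.2 aM haMem
        rw [haj] at hold
        have hareg := hreg aM.i hai v₀ hv₀
        subst hfa
        rcases harel with har | har
        · rw [if_pos har]
          show Rel.ge.holds (sumT w aM.i aM.j) (aM.d+1)
          rw [haj, heq aM.i hai hamf]
          rw [har] at hold
          have := rel_bound_gt hareg.2 hold
          show ((aM.d+1:ℕ):ℝ≥0) ≤ (D aM.i:ℝ≥0)+1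
          have h2 : ((aM.d+1:ℕ):ℝ≥0) ≤ ((D aM.i+1:ℕ):ℝ≥0) := Nat.cast_le.mpr (by omega)
          push_cast at h2 ⊢
          exact h2
        · rw [if_neg (by rw [har]; simp)]
          show Rel.le.holds (sumT w aM.i aM.j) aM.d
          rw [haj, heq aM.i hai hamf]
          rw [har] at hold
          have := rel_bound_lt hareg.1 hold
          show (D aM.i:ℝ≥0)+1 ≤ (aM.d:ℝ≥0)
          have h2 : ((D aM.i+1:ℕ):ℝ≥0) ≤ ((aM.d:ℕ):ℝ≥0) := Nat.cast_le.mpr this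
          push_cast at h2 ⊢
          exact h2
    · -- region property
      intro i j hij hjn
      rcases Nat.lt_or_ge j c.n with hj | hj
      · obtain ⟨d, hd⟩ := hS i j hij (by omega)
        rcases hd with ⟨h1, h2⟩ | ⟨h1, h2⟩
        · refine ⟨d, Or.inr (open_region_of_atoms ?_ ?_)⟩ <;>
          · rw [sucT_branch2_eq hE]
            refine Finset.mem_union_left _ (Finset.mem_sdiff.mpr
              ⟨by assumption, not_mem_M_of_j (by simp; omega)⟩)
        · refine ⟨d, Or.inl (eq_region_of_atoms ?_ ?_)⟩ <;>
          · rw [sucT_branch2_eq hE]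
            refine Finset.mem_union_left _ (Finset.mem_sdiff.mpr
              ⟨by assumption, not_mem_M_of_j (by simp; omega)⟩)
      · have hj' : j = c.n := by omega
        subst hj'
        have hi : i ≤ c.n := by omega
        by_cases hmfi : c.MaxFracIdx i
        · -- becomes an equation T = D i + 1
          have hgtM : (⟨i,c.n,Rel.gt,D i⟩:TCAtom) ∈ c.maxFracAtoms := by
            unfold TCond.maxFracAtoms
            exact Finset.mem_filter.mpr ⟨(hD i hi).1, rfl, Or.inl rfl, hmfi⟩
          have hltM : (⟨i,c.n,Rel.lt,D i + 1⟩:TCAtom) ∈ c.maxFracAtoms := by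
            unfold TCond.maxFracAtoms
            exact Finset.mem_filter.mpr ⟨(hD i hi).2, rfl, Or.inr rfl, hmfi⟩
          refine ⟨D i + 1, Or.inl (eq_region_of_atoms ?_ ?_)⟩
          · rw [sucT_branch2_eq hE]
            refine Finset.mem_union_right _ (Finset.mem_image.mpr ⟨_, hgtM, ?_⟩)
            simp
          · rw [sucT_branch2_eq hE]
            refine Finset.mem_union_right _ (Finset.mem_image.mpr ⟨_, hltM, ?_⟩)
            simp
        · -- stays open
          refine ⟨D i, Or.inr (open_region_of_atoms ?_ ?_)⟩
          · rw [sucT_branch2_eq hE]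
            refine Finset.mem_union_left _ (Finset.mem_sdiff.mpr ⟨(hD i hi).1, ?_⟩)
            intro hmem
            exact hmfi (mem_maxFracAtoms_elim hmem).2.2.2
          · rw [sucT_branch2_eq hE]
            refine Finset.mem_union_left _ (Finset.mem_sdiff.mpr ⟨(hD i hi).2, ?_⟩)
            intro hmem
            exact hmfi (mem_maxFracAtoms_elim hmem).2.2.2
  · -- no maximal-fraction atoms: the condition is unchanged
    have hM' : c.maxFracAtoms = ∅ := Finset.not_nonempty_iff_eq_empty.mp hM
    have hcc : c.sucTCond = c := by
      rw [sucT_branch2_eq hE, hM']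
      simp
    rw [hcc]
    refine ⟨⟨v₀, hv₀⟩, ?_⟩
    intro i j hij hjn
    obtain ⟨d, hd⟩ := hS i j hij hjn
    rcases hd with ⟨h1, h2⟩ | ⟨h1, h2⟩
    · exact ⟨d, Or.inr (open_region_of_atoms h1 h2)⟩
    · exact ⟨d, Or.inl (eq_region_of_atoms h1 h2)⟩

end SucTBranch2
section Final

lemma sucT_good {A : Type} (p : ElemLang A) (hp : p.WF) (hS : p.cond.Simple)
    (hC : p.cond.Canonical) : (SucT p).WF ∧ (SucT p).IsSimple := by
  classical
  obtain ⟨hpn, hpwf, hpbdd⟩ := hp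
  set c := p.cond with hc
  have hswf : c.sucTCond.WF := by
    intro b hb
    show b.i ≤ b.j ∧ b.j ≤ c.sucTCond.n
    rw [sucTCond_n]
    by_cases hE : c.suffixEqAtoms.Nonempty
    · rw [sucT_branch1_eq hE] at hb
      rcases Finset.mem_union.mp hb with hb | hb
      · exact hpwf b (Finset.mem_sdiff.mp hb).1
      · obtain ⟨aE, haE, hfa⟩ := Finset.mem_image.mp hb
        have h := hpwf aE (mem_suffixEqAtoms_elim haE).1
        subst hfa
        split_ifs <;> exact h
    · rw [sucT_branch2_eq hE] at hb
      rcases Finset.mem_union.mp hb with hb | hb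
      · exact hpwf b (Finset.mem_sdiff.mp hb).1
      · obtain ⟨aM, haM, hfa⟩ := Finset.mem_image.mp hb
        have h := hpwf aM (mem_maxFracAtoms_elim haM).1
        subst hfa
        split_ifs <;> exact h
  have hkey : (∀ v, ¬ c.sucTCond.Sat v) ∨
      ((∃ v, c.sucTCond.Sat v) ∧ ∀ i j, i ≤ j → j ≤ c.n → ∃ d : ℕ,
        (∀ v, c.sucTCond.Sat v → sumT v i j = (d:ℝ≥0)) ∨
        (∀ v, c.sucTCond.Sat v → (d:ℝ≥0) < sumT v i j ∧ sumT v i j < (d:ℝ≥0)+1)) := by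
    by_cases hne : ∃ v, c.Sat v
    · obtain ⟨v₀, hv₀⟩ := hne
      by_cases hE : c.suffixEqAtoms.Nonempty
      · exact Or.inr (sucT_branch1 c hpwf hS hE hv₀)
      · exact Or.inr (sucT_branch2 c hpwf hS hE hv₀)
    · exact Or.inl (sucT_unsat c hS hC hne)
  constructor
  · refine ⟨?_, hswf, ?_⟩
    · show c.sucTCond.n = (SucT p).word.length
      rw [sucTCond_n]
      exact hpn
    · rcases hkey with h | ⟨hex, hreg⟩
      · exact ⟨0, fun v hv => absurd hv (h v)⟩
      · obtain ⟨d, hd⟩ := hreg 0 c.n (Nat.zero_le _) le_rfl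
        refine ⟨(d:ℝ≥0)+1, ?_⟩
        intro v hv
        have hvlen : v.length = c.n + 1 := by
          have h : v.length = c.sucTCond.n + 1 := hv.1
          rw [sucTCond_n] at h
          exact h
        rw [sum_eq_sumT hvlen]
        rcases hd with hd | hd
        · rw [hd v hv]
          exact le_self_add
        · exact le_of_lt (hd v hv).2
  · rcases hkey with h | ⟨hex, hreg⟩
    · obtain ⟨c', h1, h2, h3, h4, h5⟩ := canonUnsat c.sucTCond.n
      exact ⟨c', h1, h2, h3, h4,
        fun v => ⟨fun hv => absurd hv (h v), fun hv => absurd hv (h5 v)⟩⟩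
    · refine canonicalize c.sucTCond hswf hex ?_
      intro i j hij hjn
      rw [sucTCond_n] at hjn
      exact hreg i j hij hjn

end Final

theorem statement18 {A : Type} [Finite A] (p : ElemLang A) (hp : p.WF)
    (hS : p.cond.Simple) (hC : p.cond.Canonical) (a : A) :
    ((SucA p a).WF ∧ (SucA p a).IsSimple) ∧ ((SucT p).WF ∧ (SucT p).IsSimple) :=
  ⟨sucA_good p hp hS hC a, sucT_good p hp hS hC⟩
end TimedLang
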